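/- arXiv:2110.14724 — 4 statements merged into one kernel-verified Lean document; each statement's English description precedes it below -/
import Mathlib

section
/- For a set 𝒢 of finite game forms, the following are equivalent: (i) every state in every finite concurrent reachability game whose local interactions all belong to 𝒢 is maximizable; (ii) every game form in 𝒢 is reach-maximizable. -/
open scoped BigOperators Classical

noncomputable section

/-- A probability distribution on a finite type. -/
def FDist (X : Type) [Fintype X] : Type :=
  { p : X → ℝ // (∀ x, 0 ≤ p x) ∧ ∑ x, p x = 1 }

namespace CRG

variable {A B Q D : Type} [Fintype A] [Fintype B] [Fintype Q] [Fintype D]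

/-- The support of a distribution. -/
def supp {X : Type} [Fintype X] (σ : FDist X) : Set X := { x | σ.1 x ≠ 0 }

/-- The Dirac distribution. -/
def dirac {X : Type} [Fintype X] [DecidableEq X] (x : X) : FDist X :=
  ⟨fun y => if y = x then 1 else 0, by
    constructor
    · intro y
      dsimp only
      split <;> norm_num
    · simp⟩

/-- Outcome of a pair of mixed strategies in the game in normal form with payoff `u`. -/
def out (u : A → B → ℝ) (σA : FDist A) (σB : FDist B) : ℝ :=
  ∑ a, ∑ b, σA.1 a * σB.1 b * u a b

/-- Outcome of a mixed strategy of Player A against a pure action of Player B. -/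
def outB (u : A → B → ℝ) (σA : FDist A) (b : B) : ℝ :=
  ∑ a, σA.1 a * u a b

/-- The value of a Player A mixed strategy in a game in normal form. -/
def valStratGF (u : A → B → ℝ) (σA : FDist A) : ℝ :=
  ⨅ σB : FDist B, out u σA σB

/-- The (von Neumann) value of a finite game in normal form. -/
def valGF (u : A → B → ℝ) : ℝ :=
  ⨆ σA : FDist A, valStratGF u σA

/-- The optimal Player A mixed strategies in a game in normal form. -/
def OptA (u : A → B → ℝ) : Set (FDist A) := { σA | valStratGF u σA = valGF u }

/-- The optimal actions of Player B against the Player A mixed strategy `σA`. -/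
def optActs (u : A → B → ℝ) (σA : FDist A) : Set B :=
  { b | outB u σA b = valStratGF u σA }

/-- μ_v : the lift of a valuation of the states to the Nature states. -/
def lift (dist : D → FDist Q) (v : Q → ℝ) (d : D) : ℝ := ∑ q, (dist d).1 q * v q

/-- The payoff function of the local interaction `F_q` valued by `μ_m`. -/
def locPay (δ : Q → A → B → D) (dist : D → FDist Q) (m : Q → ℝ) (q : Q) : A → B → ℝ :=
  fun a b => lift dist m (δ q a b)

/-- One-step transition probability between states. -/
def step (δ : Q → A → B → D) (dist : D → FDist Q) (σA : FDist A) (σB : FDist B)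
    (q q' : Q) : ℝ :=
  ∑ a, ∑ b, σA.1 a * σB.1 b * (dist (δ q a b)).1 q'

/-- The operator Δ on valuations of the states. -/
def Δop (δ : Q → A → B → D) (dist : D → FDist Q) (T : Q) (v : Q → ℝ) : Q → ℝ :=
  fun q => if q = T then 1 else valGF (fun a b => lift dist v (δ q a b))

/-- The target `T` is an absorbing (self-looping) sink. -/
def Absorbing (δ : Q → A → B → D) (dist : D → FDist Q) (T : Q) : Prop :=
  ∀ a b, (dist (δ T a b)).1 = fun q => if q = T then 1 else 0

/-- `m` is the least fixed point of Δ on `[0,1]^Q`. -/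
def IsLfpDelta (δ : Q → A → B → D) (dist : D → FDist Q) (T : Q) (m : Q → ℝ) : Prop :=
  (∀ q, m q ∈ Set.Icc (0:ℝ) 1) ∧ Δop δ dist T m = m ∧
    ∀ v : Q → ℝ, (∀ q, v q ∈ Set.Icc (0:ℝ) 1) → Δop δ dist T v = v → ∀ q, m q ≤ v q

/-- A strategy: a history of past states together with the current state gives a
mixed action.  (This encodes maps `Q⁺ → 𝒟(X)`.) -/
def Strat (Q X : Type) [Fintype X] : Type := List Q → Q → FDist X

/-- Residual strategy after the history `π` has been played. -/
def residual {X : Type} [Fintype X] (s : Strat Q X) (π : List Q) : Strat Q X :=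
  fun h q => s (π ++ h) q

/-- The (positional) strategy associated with a per-state choice of mixed actions. -/
def ofPos {X : Type} [Fintype X] (s : Q → FDist X) : Strat Q X := fun _ q => s q

/-- Probability of reaching the set `S` within `n` steps from current state `q`,
history `h` having been played. -/
def reachSetNAux (δ : Q → A → B → D) (dist : D → FDist Q) (S : Set Q) :
    ℕ → Strat Q A → Strat Q B → List Q → Q → ℝ
  | 0, _, _, _, q => if q ∈ S then 1 else 0
  | n + 1, sA, sB, h, q =>
      if q ∈ S then 1
      else ∑ q', step δ dist (sA h q) (sB h q) q q' *
        reachSetNAux δ dist S n sA sB (h ++ [q]) q'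

/-- Probability of reaching the set `S` within `n` steps from state `q`. -/
def reachSetN (δ : Q → A → B → D) (dist : D → FDist Q) (S : Set Q) (n : ℕ)
    (sA : Strat Q A) (sB : Strat Q B) (q : Q) : ℝ :=
  reachSetNAux δ dist S n sA sB [] q

/-- Probability of reaching the target `T` within `n` steps from state `q`. -/
def reachN (δ : Q → A → B → D) (dist : D → FDist Q) (T : Q) (n : ℕ)
    (sA : Strat Q A) (sB : Strat Q B) (q : Q) : ℝ :=
  reachSetN δ dist {T} n sA sB q

/-- Probability of eventually reaching the target `T` from state `q`. -/
def reach (δ : Q → A → B → D) (dist : D → FDist Q) (T : Q)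
    (sA : Strat Q A) (sB : Strat Q B) (q : Q) : ℝ :=
  ⨆ n : ℕ, reachN δ dist T n sA sB q

/-- The value of a Player A strategy from state `q`. -/
def valA (δ : Q → A → B → D) (dist : D → FDist Q) (T : Q) (sA : Strat Q A) (q : Q) : ℝ :=
  ⨅ sB : Strat Q B, reach δ dist T sA sB q

/-- The value of the game from state `q`. -/
def value (δ : Q → A → B → D) (dist : D → FDist Q) (T : Q) (q : Q) : ℝ :=
  ⨆ sA : Strat Q A, valA δ dist T sA q

/-- A state is maximizable when Player A has an optimal strategy from it. -/
def Maximizable (δ : Q → A → B → D) (dist : D → FDist Q) (T q : Q) : Prop :=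
  ∃ sA : Strat Q A, valA δ dist T sA q = value δ dist T q

/-- A positional Player A strategy locally dominates the valuation `v`. -/
def LocallyDominates (δ : Q → A → B → D) (dist : D → FDist Q)
    (sA : Q → FDist A) (v : Q → ℝ) : Prop :=
  ∀ q, v q ≤ valStratGF (fun a b => lift dist v (δ q a b)) (sA q)

/-- Transition function ι of the MDP induced by a positional Player A strategy. -/
def stepB [DecidableEq B] (δ : Q → A → B → D) (dist : D → FDist Q)
    (sA : Q → FDist A) (q : Q) (b : B) (q' : Q) : ℝ :=
  step δ dist (sA q) (dirac b) q q'

/-- An end component of the MDP induced by the positional Player A strategy `sA`. -/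
structure EndComp [DecidableEq B] (δ : Q → A → B → D) (dist : D → FDist Q)
    (sA : Q → FDist A) where
  states : Set Q
  acts : Q → Set B
  acts_nonempty : ∀ q ∈ states, (acts q).Nonempty
  closed : ∀ q ∈ states, ∀ b ∈ acts q, ∀ q', stepB δ dist sA q b q' ≠ 0 → q' ∈ states
  connected : ∀ q ∈ states, ∀ q' ∈ states,
    Relation.ReflTransGen
      (fun x y => x ∈ states ∧ ∃ b ∈ acts x, stepB δ dist sA x b y ≠ 0) q q'

/-- `S_D` : the Nature states having a non-zero probability to reach `S`. -/
def natS (dist : D → FDist Q) (S : Set Q) : Set D :=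
  { d | ∃ q ∈ S, (dist d).1 q ≠ 0 }

/-- Progressive optimal local strategies at `q` w.r.t. the set `Gd`. -/
def Prog (δ : Q → A → B → D) (dist : D → FDist Q) (m : Q → ℝ) (q : Q)
    (Gd : Set Q) : Set (FDist A) :=
  { σA | σA ∈ OptA (locPay δ dist m q) ∧
      ∀ b ∈ optActs (locPay δ dist m q) σA, ∃ a ∈ supp σA, δ q a b ∈ natS dist Gd }

/-- Risky optimal local strategies at `q` w.r.t. the set `Bd`. -/
def Risk (δ : Q → A → B → D) (dist : D → FDist Q) (m : Q → ℝ) (q : Q)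
    (Bd : Set Q) : Set (FDist A) :=
  { σA | σA ∈ OptA (locPay δ dist m q) ∧
      ∃ b ∈ optActs (locPay δ dist m q) σA, ∃ a ∈ supp σA, δ q a b ∈ natS dist Bd }

/-- Efficient local strategies: progressive and not risky. -/
def Eff (δ : Q → A → B → D) (dist : D → FDist Q) (m : Q → ℝ) (q : Q)
    (Gd Bd : Set Q) : Set (FDist A) :=
  Prog δ dist m q Gd \ Risk δ dist m q Bd

/-- The increasing sequence of sets of secure states w.r.t. `Bd`. -/
def SecN (δ : Q → A → B → D) (dist : D → FDist Q) (m : Q → ℝ) (T : Q) (Bd : Set Q) :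
    ℕ → Set Q
  | 0 => {T}
  | n + 1 => SecN δ dist m T Bd n ∪
      { q | q ∉ Bd ∧ (Eff δ dist m q (SecN δ dist m T Bd n) Bd).Nonempty }

/-- The set of secure states w.r.t. `Bd`. -/
def Sec (δ : Q → A → B → D) (dist : D → FDist Q) (m : Q → ℝ) (T : Q) (Bd : Set Q) :
    Set Q :=
  (⋃ n : ℕ, SecN δ dist m T Bd n) ∪ { q | m q = 0 }

/-- The sequence of sets of bad states. -/
def BadN (δ : Q → A → B → D) (dist : D → FDist Q) (m : Q → ℝ) (T : Q) : ℕ → Set Q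
  | 0 => ∅
  | n + 1 => (Sec δ dist m T (BadN δ dist m T n))ᶜ

/-- The set of bad states. -/
def Bad (δ : Q → A → B → D) (dist : D → FDist Q) (m : Q → ℝ) (T : Q) : Set Q :=
  BadN δ dist m T (Fintype.card Q)

/-- `α[y]` : the total valuation extending the partial valuation `α : O∖E → [0,1]`
with the value `y` on `E`. -/
def extendVal {O : Type} (E : Set O) (α : O → ℝ) (y : ℝ) : O → ℝ :=
  fun o => if o ∈ E then y else α o

/-- The map `f_α : y ↦ val_{⟨F, α[y]⟩}`. -/
def fval {O : Type} (ρ : A → B → O) (E : Set O) (α : O → ℝ) (y : ℝ) : ℝ :=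
  valGF (fun a b => extendVal E α y (ρ a b))

/-- `v` is the least fixed point of `f_α` on `[0,1]`. -/
def IsLfpVal {O : Type} (ρ : A → B → O) (E : Set O) (α : O → ℝ) (v : ℝ) : Prop :=
  v ∈ Set.Icc (0:ℝ) 1 ∧ fval ρ E α v = v ∧
    ∀ y ∈ Set.Icc (0:ℝ) 1, fval ρ E α y = y → v ≤ y

/-- The game form `ρ` is reach-maximizable w.r.t. the partial valuation `α : O∖E → [0,1]`. -/
def RMwrt {O : Type} (ρ : A → B → O) (E : Set O) (α : O → ℝ) : Prop :=
  ∀ v : ℝ, IsLfpVal ρ E α v →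
    v = 0 ∨
      ∃ σA ∈ OptA (fun a b => extendVal E α v (ρ a b)),
        ∀ b ∈ optActs (fun a b => extendVal E α v (ρ a b)) σA,
          ∃ a ∈ supp σA, ρ a b ∉ E

/-- A reach-maximizable game form: RM w.r.t. every partial valuation of its outcomes. -/
def RMform {O : Type} (ρ : A → B → O) : Prop :=
  ∀ (E : Set O) (α : O → ℝ), (∀ o ∉ E, α o ∈ Set.Icc (0:ℝ) 1) → RMwrt ρ E α

/-- A determined game form. -/
def Determined {O : Type} (ρ : A → B → O) : Prop :=
  ∀ E : Set O, (∃ a, ∀ b, ρ a b ∈ E) ∨ (∃ b, ∀ a, ρ a b ∉ E)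

/-- Transition function of the three-state reachability game `C_{(F,α)}`:
state `0` is `q₀`, state `1` is the target `⊤`, state `2` is the bin `⊥`. -/
def triδ {O : Type} (ρ : A → B → O) (E : Set O) :
    Fin 3 → A → B → (Fin 3 ⊕ {o : O // o ∉ E}) :=
  fun s a b =>
    if s = 0 then
      if h : ρ a b ∈ E then Sum.inl 0 else Sum.inr ⟨ρ a b, h⟩
    else Sum.inl s

/-- Nature distributions of the three-state reachability game `C_{(F,α)}`. -/
def triDist {O : Type} (E : Set O) (α : O → ℝ)
    (hα : ∀ o ∉ E, α o ∈ Set.Icc (0:ℝ) 1) :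
    (Fin 3 ⊕ {o : O // o ∉ E}) → FDist (Fin 3) := fun d =>
  match d with
  | Sum.inl t => dirac t
  | Sum.inr x =>
      ⟨![0, α x.1, 1 - α x.1], by
        obtain ⟨h0, h1⟩ := hα x.1 x.2
        constructor
        · intro s
          fin_cases s <;> simp <;> linarith
        · simp [Fin.sum_univ_three]⟩

/-- An abstract (finite) game form with actions `A` and `B`. -/
structure GameForm (A B : Type) where
  O : Type
  fin : Fintype O
  ρ : A → B → O

/-- All local interactions of the arena `δ` belong to the set `𝒢` of game forms
(up to a renaming of the outcomes into Nature states). -/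
def UsesForms {Q D : Type} (𝒢 : Set (GameForm A B)) (δ : Q → A → B → D) : Prop :=
  ∀ q, ∃ F ∈ 𝒢, ∃ g : F.O → D, δ q = fun a b => g (F.ρ a b)

/-- The sequence of iterates of Δ starting from the valuation `1_{⊤}`. -/
def vseq (δ : Q → A → B → D) (dist : D → FDist Q) (T : Q) : ℕ → Q → ℝ
  | 0 => fun q => if q = T then 1 else 0
  | n + 1 => Δop δ dist T (vseq δ dist T n)

/-- Relevant paths w.r.t. the strategy `sA` from the state `q₀`: the pair `(h, q)`
encodes the path `h · q` (history `h`, current state `q`). -/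
inductive Relevant [DecidableEq B] (δ : Q → A → B → D) (dist : D → FDist Q)
    (m : Q → ℝ) (sA : Strat Q A) (q₀ : Q) : List Q → Q → Prop
  | base : Relevant δ dist m sA q₀ [] q₀
  | step {h : List Q} {q q' : Q} :
      Relevant δ dist m sA q₀ h q →
      (∃ b ∈ optActs (locPay δ dist m q) (sA h q),
        0 < CRG.step δ dist (sA h q) (dirac b) q q') →
      Relevant δ dist m sA q₀ (h ++ [q]) q'

end CRG

set_option linter.unusedVariables false
set_option linter.unusedSectionVars false
namespace Stmt10Aux

open CRG Finset

section Basic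
variable {X : Type} [Fintype X]

lemma fd_nonneg (σ : FDist X) (x : X) : 0 ≤ σ.1 x := σ.2.1 x
lemma fd_sum (σ : FDist X) : ∑ x, σ.1 x = 1 := σ.2.2

lemma fd_le_one (σ : FDist X) (x : X) : σ.1 x ≤ 1 := by
  calc σ.1 x ≤ ∑ y, σ.1 y :=
        Finset.single_le_sum (fun y _ => σ.2.1 y) (Finset.mem_univ x)
  _ = 1 := σ.2.2

lemma fd_exists_pos (σ : FDist X) : ∃ x, σ.1 x ≠ 0 := by
  by_contra h
  push_neg at h
  have h0 : ∑ x, σ.1 x = 0 := Finset.sum_eq_zero (fun x _ => h x)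
  rw [σ.2.2] at h0; norm_num at h0

instance (priority := low) [Nonempty X] : Nonempty (FDist X) :=
  ⟨CRG.dirac (Classical.arbitrary X)⟩

lemma sum_dirac_mul [DecidableEq X] (x : X) (f : X → ℝ) :
    ∑ y, (dirac x).1 y * f y = f x := by
  simp [dirac]

lemma convex_le {w f : X → ℝ} {c : ℝ} (hw : ∀ x, 0 ≤ w x) (hsum : ∑ x, w x = 1)
    (hf : ∀ x, f x ≤ c) : ∑ x, w x * f x ≤ c := by
  calc ∑ x, w x * f x ≤ ∑ x, w x * c :=
        Finset.sum_le_sum (fun x _ => mul_le_mul_of_nonneg_left (hf x) (hw x))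
  _ = c := by rw [← Finset.sum_mul, hsum, one_mul]

lemma le_convex {w f : X → ℝ} {c : ℝ} (hw : ∀ x, 0 ≤ w x) (hsum : ∑ x, w x = 1)
    (hf : ∀ x, c ≤ f x) : c ≤ ∑ x, w x * f x := by
  calc c = ∑ x, w x * c := by rw [← Finset.sum_mul, hsum, one_mul]
  _ ≤ ∑ x, w x * f x :=
        Finset.sum_le_sum (fun x _ => mul_le_mul_of_nonneg_left (hf x) (hw x))

lemma convex_mem_of_eq {w f : X → ℝ} {c : ℝ} (hw : ∀ x, 0 ≤ w x) (hsum : ∑ x, w x = 1)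
    (hf : ∀ x, f x ≤ c) (heq : c ≤ ∑ x, w x * f x) :
    ∀ x, w x ≠ 0 → f x = c := by
  intro x hx
  by_contra hne
  have hlt : f x < c := lt_of_le_of_ne (hf x) hne
  have hxpos : 0 < w x := lt_of_le_of_ne (hw x) (Ne.symm hx)
  have hstrict : ∑ y, w y * f y < ∑ y, w y * c := by
    apply Finset.sum_lt_sum (fun y _ => mul_le_mul_of_nonneg_left (hf y) (hw y))
    exact ⟨x, Finset.mem_univ x, by nlinarith⟩
  rw [← Finset.sum_mul, hsum, one_mul] at hstrict
  linarith

end Basic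

section Games
variable {A B : Type} [Fintype A] [Fintype B] [Nonempty A] [Nonempty B]

lemma out_eq_sum_outB (u : A → B → ℝ) (σA : FDist A) (σB : FDist B) :
    out u σA σB = ∑ b, σB.1 b * outB u σA b := by
  unfold out outB
  rw [Finset.sum_comm]
  refine Finset.sum_congr rfl (fun b _ => ?_)
  rw [Finset.mul_sum]
  refine Finset.sum_congr rfl (fun a _ => ?_)
  ring

lemma out_dirac (u : A → B → ℝ) (σA : FDist A) (b₀ : B) :
    out u σA (dirac b₀) = outB u σA b₀ := by
  rw [out_eq_sum_outB]
  exact sum_dirac_mul b₀ _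

lemma outB_le_out (u : A → B → ℝ) (σA : FDist A) (σB : FDist B) {b₀ : B}
    (h : ∀ b, outB u σA b₀ ≤ outB u σA b) : outB u σA b₀ ≤ out u σA σB := by
  rw [out_eq_sum_outB]
  exact le_convex σB.2.1 σB.2.2 h

lemma valStratGF_eq (u : A → B → ℝ) (σA : FDist A) {b₀ : B}
    (h : ∀ b, outB u σA b₀ ≤ outB u σA b) : valStratGF u σA = outB u σA b₀ := by
  apply le_antisymm
  · have hb : BddBelow (Set.range (out u σA)) := by
      refine ⟨outB u σA b₀, ?_⟩
      rintro x ⟨σB, rfl⟩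
      exact outB_le_out u σA σB h
    calc valStratGF u σA ≤ out u σA (dirac b₀) := ciInf_le hb (dirac b₀)
    _ = outB u σA b₀ := out_dirac u σA b₀
  · exact le_ciInf (fun σB => outB_le_out u σA σB h)

lemma exists_valStratGF (u : A → B → ℝ) (σA : FDist A) :
    ∃ b₀, valStratGF u σA = outB u σA b₀ ∧ ∀ b, outB u σA b₀ ≤ outB u σA b := by
  obtain ⟨b₀, -, h⟩ := Finset.exists_min_image Finset.univ (outB u σA)
    ⟨Classical.arbitrary B, Finset.mem_univ _⟩
  exact ⟨b₀, valStratGF_eq u σA (fun b => h b (Finset.mem_univ b)),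
    fun b => h b (Finset.mem_univ b)⟩

lemma valStratGF_le_outB (u : A → B → ℝ) (σA : FDist A) (b : B) :
    valStratGF u σA ≤ outB u σA b := by
  obtain ⟨b₀, heq, hmin⟩ := exists_valStratGF u σA
  rw [heq]; exact hmin b

lemma le_valStratGF {c : ℝ} (u : A → B → ℝ) (σA : FDist A)
    (h : ∀ b, c ≤ outB u σA b) : c ≤ valStratGF u σA := by
  obtain ⟨b₀, heq, -⟩ := exists_valStratGF u σA
  rw [heq]; exact h b₀

lemma outB_le {u : A → B → ℝ} {c : ℝ} (h : ∀ a b, u a b ≤ c) (σA : FDist A) (b : B) :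
    outB u σA b ≤ c := convex_le σA.2.1 σA.2.2 (fun a => h a b)

lemma le_outB {u : A → B → ℝ} {c : ℝ} (h : ∀ a b, c ≤ u a b) (σA : FDist A) (b : B) :
    c ≤ outB u σA b := le_convex σA.2.1 σA.2.2 (fun a => h a b)

lemma exists_ub (u : A → B → ℝ) : ∃ c, ∀ a b, u a b ≤ c := by
  obtain ⟨p, -, h⟩ := Finset.exists_max_image (Finset.univ ×ˢ Finset.univ)
    (fun p : A × B => u p.1 p.2)
    ⟨(Classical.arbitrary A, Classical.arbitrary B), by simp⟩
  exact ⟨u p.1 p.2, fun a b => h (a, b) (by simp)⟩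

lemma bddAbove_valStrat (u : A → B → ℝ) : BddAbove (Set.range (valStratGF u)) := by
  obtain ⟨c, hc⟩ := exists_ub u
  refine ⟨c, ?_⟩
  rintro x ⟨σA, rfl⟩
  exact le_trans (valStratGF_le_outB u σA (Classical.arbitrary B))
    (outB_le hc σA _)

lemma valStratGF_le_valGF (u : A → B → ℝ) (σA : FDist A) :
    valStratGF u σA ≤ valGF u := le_ciSup (bddAbove_valStrat u) σA

lemma valGF_le {u : A → B → ℝ} {c : ℝ} (h : ∀ σA, valStratGF u σA ≤ c) :
    valGF u ≤ c := ciSup_le h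

lemma exists_lt_valStrat {u : A → B → ℝ} {c : ℝ} (h : c < valGF u) :
    ∃ σA, c < valStratGF u σA := exists_lt_of_lt_ciSup h

lemma outB_mono {u u' : A → B → ℝ} (h : ∀ a b, u a b ≤ u' a b) (σA : FDist A) (b : B) :
    outB u σA b ≤ outB u' σA b :=
  Finset.sum_le_sum fun a _ => mul_le_mul_of_nonneg_left (h a b) (σA.2.1 a)

lemma valStratGF_mono {u u' : A → B → ℝ} (h : ∀ a b, u a b ≤ u' a b) (σA : FDist A) :
    valStratGF u σA ≤ valStratGF u' σA := by
  obtain ⟨b₀, heq, -⟩ := exists_valStratGF u' σA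
  rw [heq]
  exact le_trans (valStratGF_le_outB u σA b₀) (outB_mono h σA b₀)

lemma valGF_mono {u u' : A → B → ℝ} (h : ∀ a b, u a b ≤ u' a b) :
    valGF u ≤ valGF u' :=
  ciSup_le fun σA => le_trans (valStratGF_mono h σA) (valStratGF_le_valGF u' σA)

lemma outB_add_const (u : A → B → ℝ) (c : ℝ) (σA : FDist A) (b : B) :
    outB (fun a b => u a b + c) σA b = outB u σA b + c := by
  unfold outB
  rw [show ∀ x : ℝ, x + c = x + c from fun x => rfl]
  calc ∑ a, σA.1 a * (u a b + c) = (∑ a, σA.1 a * u a b) + (∑ a, σA.1 a) * c := by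
        rw [Finset.sum_mul, ← Finset.sum_add_distrib]
        exact Finset.sum_congr rfl (fun a _ => by ring)
  _ = (∑ a, σA.1 a * u a b) + c := by rw [σA.2.2, one_mul]

lemma valStratGF_add_const (u : A → B → ℝ) (c : ℝ) (σA : FDist A) :
    valStratGF (fun a b => u a b + c) σA = valStratGF u σA + c := by
  obtain ⟨b₀, heq, hmin⟩ := exists_valStratGF u σA
  have hmin' : ∀ b, outB (fun a b => u a b + c) σA b₀ ≤ outB (fun a b => u a b + c) σA b := by
    intro b
    rw [outB_add_const, outB_add_const]
    linarith [hmin b]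
  rw [valStratGF_eq _ _ hmin', outB_add_const, heq]

lemma valGF_add_const (u : A → B → ℝ) (c : ℝ) :
    valGF (fun a b => u a b + c) = valGF u + c := by
  apply le_antisymm
  · refine valGF_le fun σA => ?_
    rw [valStratGF_add_const]
    linarith [valStratGF_le_valGF u σA]
  · have h : valGF u ≤ valGF (fun a b => u a b + c) - c := by
      refine valGF_le fun σA => ?_
      have h2 := valStratGF_le_valGF (fun a b => u a b + c) σA
      rw [valStratGF_add_const] at h2
      linarith
    linarith

lemma valGF_le_of_forall {u : A → B → ℝ} {c : ℝ} (h : ∀ a b, u a b ≤ c) :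
    valGF u ≤ c :=
  valGF_le fun σA => le_trans (valStratGF_le_outB u σA (Classical.arbitrary B))
    (outB_le h σA _)

lemma le_valGF_of_forall {u : A → B → ℝ} {c : ℝ} (h : ∀ a b, c ≤ u a b) :
    c ≤ valGF u :=
  le_trans (le_valStratGF u (Classical.arbitrary (FDist A)) (fun b => le_outB h _ b))
    (valStratGF_le_valGF u _)

lemma valGF_le_add {u u' : A → B → ℝ} {c : ℝ} (h : ∀ a b, u' a b ≤ u a b + c) :
    valGF u' ≤ valGF u + c := by
  calc valGF u' ≤ valGF (fun a b => u a b + c) := valGF_mono h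
  _ = valGF u + c := valGF_add_const u c

end Games

end Stmt10Aux
namespace Stmt10Aux

open CRG Finset

/-! ### Scalar least fixed point machinery -/

section Lfp

def iter (f : ℝ → ℝ) : ℕ → ℝ
  | 0 => 0
  | n + 1 => f (iter f n)

def lfp (f : ℝ → ℝ) : ℝ := ⨆ n, iter f n

structure NiceFun (f : ℝ → ℝ) : Prop where
  mono : ∀ {x y}, x ≤ y → f x ≤ f y
  mem : ∀ x, 0 ≤ x → x ≤ 1 → 0 ≤ f x ∧ f x ≤ 1
  lip : ∀ {x y}, x ≤ y → f y ≤ f x + (y - x)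

variable {f : ℝ → ℝ}

lemma iter_mem (hf : NiceFun f) : ∀ n, 0 ≤ iter f n ∧ iter f n ≤ 1
  | 0 => ⟨le_refl 0, zero_le_one⟩
  | n + 1 => hf.mem _ (iter_mem hf n).1 (iter_mem hf n).2

lemma iter_le_pre (hf : NiceFun f) {y : ℝ} (hy0 : 0 ≤ y) (hy : f y ≤ y) :
    ∀ n, iter f n ≤ y
  | 0 => hy0
  | n + 1 => le_trans (hf.mono (iter_le_pre hf hy0 hy n)) hy

lemma bddAbove_iter (hf : NiceFun f) : BddAbove (Set.range (iter f)) :=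
  ⟨1, by rintro x ⟨n, rfl⟩; exact (iter_mem hf n).2⟩

lemma iter_le_lfp (hf : NiceFun f) (n : ℕ) : iter f n ≤ lfp f :=
  le_ciSup (bddAbove_iter hf) n

lemma lfp_le_pre (hf : NiceFun f) {y : ℝ} (hy0 : 0 ≤ y) (hy : f y ≤ y) : lfp f ≤ y :=
  ciSup_le (iter_le_pre hf hy0 hy)

lemma lfp_mem (hf : NiceFun f) : 0 ≤ lfp f ∧ lfp f ≤ 1 :=
  ⟨le_trans (iter_mem hf 0).1 (iter_le_lfp hf 0),
   ciSup_le fun n => (iter_mem hf n).2⟩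

lemma exists_iter_near (hf : NiceFun f) {ε : ℝ} (hε : 0 < ε) :
    ∃ n, lfp f - ε < iter f n := by
  have h : lfp f - ε < lfp f := sub_lt_self _ hε
  exact exists_lt_of_lt_ciSup h

lemma lfp_fixed (hf : NiceFun f) : f (lfp f) = lfp f := by
  have h1 : lfp f ≤ f (lfp f) := by
    refine ciSup_le fun n => ?_
    cases n with
    | zero => exact (hf.mem _ (lfp_mem hf).1 (lfp_mem hf).2).1
    | succ n => exact hf.mono (iter_le_lfp hf n)
  have h2 : f (lfp f) ≤ lfp f := by
    by_contra hlt
    push_neg at hlt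
    obtain ⟨n, hn⟩ := exists_iter_near hf (show (0:ℝ) < f (lfp f) - lfp f by linarith)
    have hle := hf.lip (iter_le_lfp hf n)
    have h3 : iter f (n + 1) ≤ lfp f := iter_le_lfp hf (n + 1)
    have h4 : iter f (n + 1) = f (iter f n) := rfl
    linarith
  exact le_antisymm h2 h1

lemma eq_lfp (hf : NiceFun f) {v : ℝ} (hv0 : 0 ≤ v) (hv1 : v ≤ 1) (hfix : f v = v)
    (hleast : ∀ y, 0 ≤ y → y ≤ 1 → f y = y → v ≤ y) : v = lfp f := by
  have h1 : lfp f ≤ v := lfp_le_pre hf hv0 (le_of_eq hfix)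
  have h2 : v ≤ lfp f := hleast _ (lfp_mem hf).1 (lfp_mem hf).2 (lfp_fixed hf)
  exact le_antisymm h2 h1

end Lfp

/-! ### fval is a nice function -/

section Fval
variable {A B O : Type} [Fintype A] [Fintype B] [Nonempty A] [Nonempty B]

lemma fval_nice (ρ : A → B → O) (E : Set O) (α : O → ℝ)
    (hα : ∀ o ∉ E, α o ∈ Set.Icc (0:ℝ) 1) : NiceFun (fval ρ E α) := by
  constructor
  · intro x y hxy
    refine valGF_mono fun a b => ?_
    unfold extendVal
    split
    · exact hxy
    · exact le_refl _
  · intro x hx0 hx1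
    constructor
    · refine le_valGF_of_forall fun a b => ?_
      unfold extendVal
      split
      · exact hx0
      · exact (hα _ (by assumption)).1
    · refine valGF_le_of_forall fun a b => ?_
      unfold extendVal
      split
      · exact hx1
      · exact (hα _ (by assumption)).2
  · intro x y hxy
    refine valGF_le_add fun a b => ?_
    unfold extendVal
    split
    · linarith
    · linarith [le_refl (α (ρ a b))]

lemma isLfpVal_eq_lfp {ρ : A → B → O} {E : Set O} {α : O → ℝ}
    (hα : ∀ o ∉ E, α o ∈ Set.Icc (0:ℝ) 1) {v : ℝ} (h : IsLfpVal ρ E α v) :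
    v = lfp (fval ρ E α) :=
  eq_lfp (fval_nice ρ E α hα) h.1.1 h.1.2 h.2.1
    (fun y hy0 hy1 hfix => h.2.2 y ⟨hy0, hy1⟩ hfix)

end Fval

/-! ### lift, Δop, vseq, and the least fixed point mval -/

section Arena
variable {A B Q D : Type} [Fintype A] [Fintype B] [Fintype Q] [Fintype D]
  [Nonempty A] [Nonempty B]
variable (δ : Q → A → B → D) (dist : D → FDist Q) (T : Q)

lemma lift_nonneg {v : Q → ℝ} (hv : ∀ q, 0 ≤ v q) (d : D) : 0 ≤ lift dist v d :=
  le_convex (dist d).2.1 (dist d).2.2 hv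

lemma lift_le {v : Q → ℝ} {c : ℝ} (hv : ∀ q, v q ≤ c) (d : D) : lift dist v d ≤ c :=
  convex_le (dist d).2.1 (dist d).2.2 hv

lemma lift_mono {v w : Q → ℝ} (h : ∀ q, v q ≤ w q) (d : D) :
    lift dist v d ≤ lift dist w d :=
  Finset.sum_le_sum fun q _ => mul_le_mul_of_nonneg_left (h q) ((dist d).2.1 q)

lemma lift_add_const (v : Q → ℝ) (c : ℝ) (d : D) :
    lift dist (fun q => v q + c) d = lift dist v d + c := by
  unfold lift
  calc ∑ q, (dist d).1 q * (v q + c)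
      = (∑ q, (dist d).1 q * v q) + (∑ q, (dist d).1 q) * c := by
        rw [Finset.sum_mul, ← Finset.sum_add_distrib]
        exact Finset.sum_congr rfl (fun q _ => by ring)
  _ = (∑ q, (dist d).1 q * v q) + c := by rw [(dist d).2.2, one_mul]

lemma Δop_mono {v w : Q → ℝ} (h : ∀ q, v q ≤ w q) (q : Q) :
    Δop δ dist T v q ≤ Δop δ dist T w q := by
  unfold Δop
  split
  · exact le_refl _
  · exact valGF_mono fun a b => lift_mono dist h _

lemma Δop_mem {v : Q → ℝ} (h0 : ∀ q, 0 ≤ v q) (h1 : ∀ q, v q ≤ 1) (q : Q) :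
    0 ≤ Δop δ dist T v q ∧ Δop δ dist T v q ≤ 1 := by
  unfold Δop
  split
  · norm_num
  · exact ⟨le_valGF_of_forall fun a b => lift_nonneg dist h0 _,
      valGF_le_of_forall fun a b => lift_le dist h1 _⟩

lemma Δop_add_const {v : Q → ℝ} {c : ℝ} (hc : 0 ≤ c) (q : Q) :
    Δop δ dist T (fun q => v q + c) q ≤ Δop δ dist T v q + c := by
  unfold Δop
  split
  · linarith
  · refine valGF_le_add fun a b => ?_
    rw [lift_add_const]

lemma vseq_mem : ∀ n q, 0 ≤ vseq δ dist T n q ∧ vseq δ dist T n q ≤ 1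
  | 0, q => by unfold vseq; split <;> norm_num
  | n + 1, q => Δop_mem δ dist T (fun q => (vseq_mem n q).1) (fun q => (vseq_mem n q).2) q

lemma vseq_succ_le : ∀ n q, vseq δ dist T n q ≤ vseq δ dist T (n + 1) q
  | 0, q => by
      show (if q = T then (1:ℝ) else 0) ≤ Δop δ dist T (vseq δ dist T 0) q
      unfold Δop
      split
      · exact le_refl _
      · exact le_valGF_of_forall fun a b =>
          lift_nonneg dist (fun q => (vseq_mem δ dist T 0 q).1) _
  | n + 1, q => Δop_mono δ dist T (vseq_succ_le n) q

lemma vseq_mono (q : Q) : Monotone (fun n => vseq δ dist T n q) :=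
  monotone_nat_of_le_succ (fun n => vseq_succ_le δ dist T n q)

lemma vseq_T : ∀ n, vseq δ dist T n T = 1
  | 0 => by unfold vseq; simp
  | n + 1 => by unfold vseq Δop; simp

def mval : Q → ℝ := fun q => ⨆ n, vseq δ dist T n q

lemma bddAbove_vseq (q : Q) : BddAbove (Set.range (fun n => vseq δ dist T n q)) :=
  ⟨1, by rintro x ⟨n, rfl⟩; exact (vseq_mem δ dist T n q).2⟩

lemma vseq_le_mval (n : ℕ) (q : Q) : vseq δ dist T n q ≤ mval δ dist T q :=
  le_ciSup (bddAbove_vseq δ dist T q) n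

lemma mval_mem (q : Q) : 0 ≤ mval δ dist T q ∧ mval δ dist T q ≤ 1 :=
  ⟨le_trans (vseq_mem δ dist T 0 q).1 (vseq_le_mval δ dist T 0 q),
   ciSup_le fun n => (vseq_mem δ dist T n q).2⟩

lemma mval_T : mval δ dist T T = 1 := by
  apply le_antisymm (ciSup_le fun n => le_of_eq (vseq_T δ dist T n))
  calc (1:ℝ) = vseq δ dist T 0 T := (vseq_T δ dist T 0).symm
  _ ≤ mval δ dist T T := vseq_le_mval δ dist T 0 T

lemma uniform_approx {ι : Type} [Fintype ι] (w : ℕ → ι → ℝ)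
    (hmono : ∀ i, Monotone fun n => w n i) (hbdd : ∀ i n, w n i ≤ 1)
    {ε : ℝ} (hε : 0 < ε) : ∃ N, ∀ i, (⨆ n, w n i) - ε ≤ w N i := by
  have key : ∀ i : ι, ∃ n, (⨆ n, w n i) - ε < w n i := by
    intro i
    exact exists_lt_of_lt_ciSup (sub_lt_self _ hε)
  choose g hg using key
  refine ⟨Finset.univ.sup g, fun i => ?_⟩
  exact le_trans (le_of_lt (hg i)) (hmono i (Finset.le_sup (Finset.mem_univ i)))

lemma mval_fixed (q : Q) : Δop δ dist T (mval δ dist T) q = mval δ dist T q := by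
  apply le_antisymm
  · refine le_of_forall_pos_le_add fun ε hε => ?_
    obtain ⟨N, hN⟩ := uniform_approx (vseq δ dist T)
      (vseq_mono δ dist T) (fun q n => (vseq_mem δ dist T n q).2) hε
    have h1 : ∀ q', mval δ dist T q' ≤ vseq δ dist T N q' + ε := by
      intro q'
      have := hN q'
      unfold mval
      linarith
    calc Δop δ dist T (mval δ dist T) q
        ≤ Δop δ dist T (fun q' => vseq δ dist T N q' + ε) q := Δop_mono δ dist T h1 q
    _ ≤ Δop δ dist T (vseq δ dist T N) q + ε := Δop_add_const δ dist T (le_of_lt hε) q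
    _ = vseq δ dist T (N + 1) q + ε := rfl
    _ ≤ mval δ dist T q + ε := by linarith [vseq_le_mval δ dist T (N + 1) q]
  · refine ciSup_le fun n => ?_
    cases n with
    | zero =>
        show (if q = T then (1:ℝ) else 0) ≤ _
        unfold Δop
        split
        · exact le_refl _
        · exact le_valGF_of_forall fun a b =>
            lift_nonneg dist (fun q' => (mval_mem δ dist T q').1) _
    | succ n =>
        exact Δop_mono δ dist T (vseq_le_mval δ dist T n) q

lemma mval_least {w : Q → ℝ} (h0 : ∀ q, 0 ≤ w q)
    (hpre : ∀ q, Δop δ dist T w q ≤ w q) (q : Q) : mval δ dist T q ≤ w q := by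
  have hT : (1:ℝ) ≤ w T := by
    have := hpre T
    unfold Δop at this
    simpa using this
  have key : ∀ n q, vseq δ dist T n q ≤ w q := by
    intro n
    induction n with
    | zero =>
        intro q
        show (if q = T then (1:ℝ) else 0) ≤ w q
        split
        · rename_i h
          rw [h]
          exact hT
        · exact h0 q
    | succ n ih =>
        intro q
        exact le_trans (Δop_mono δ dist T ih q) (hpre q)
  exact ciSup_le fun n => key n q

end Arena

end Stmt10Aux
namespace Stmt10Aux

open CRG Finset

section Reach
variable {A B Q D : Type} [Fintype A] [Fintype B] [Fintype Q] [Fintype D]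
  [Nonempty A] [Nonempty B]
variable (δ : Q → A → B → D) (dist : D → FDist Q) (T : Q)

instance (priority := low) {X Y : Type} [Fintype Y] [Nonempty Y] : Nonempty (Strat X Y) :=
  ⟨fun _ _ => Classical.arbitrary _⟩

lemma out_const (c : ℝ) (σA : FDist A) (σB : FDist B) : out (fun _ _ => c) σA σB = c := by
  unfold out
  have h : ∀ a, ∑ b, σA.1 a * σB.1 b * c = σA.1 a * c := by
    intro a
    calc ∑ b, σA.1 a * σB.1 b * c = ∑ b, σB.1 b * (σA.1 a * c) :=
          Finset.sum_congr rfl (fun b _ => by ring)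
    _ = (∑ b, σB.1 b) * (σA.1 a * c) := by rw [Finset.sum_mul]
    _ = σA.1 a * c := by rw [σB.2.2, one_mul]
  rw [Finset.sum_congr rfl (fun a _ => h a), ← Finset.sum_mul, σA.2.2, one_mul]

lemma step_nonneg (σA : FDist A) (σB : FDist B) (q q' : Q) :
    0 ≤ step δ dist σA σB q q' :=
  Finset.sum_nonneg fun a _ => Finset.sum_nonneg fun b _ =>
    mul_nonneg (mul_nonneg (σA.2.1 a) (σB.2.1 b)) ((dist _).2.1 q')

lemma step_psi (σA : FDist A) (σB : FDist B) (q : Q) (ψ : Q → ℝ) :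
    ∑ q', step δ dist σA σB q q' * ψ q'
      = out (fun a b => lift dist ψ (δ q a b)) σA σB := by
  unfold step out lift
  have h : ∀ q', (∑ a, ∑ b, σA.1 a * σB.1 b * (dist (δ q a b)).1 q') * ψ q'
      = ∑ a, ∑ b, σA.1 a * σB.1 b * ((dist (δ q a b)).1 q' * ψ q') := by
    intro q'
    rw [Finset.sum_mul]
    refine Finset.sum_congr rfl fun a _ => ?_
    rw [Finset.sum_mul]
    exact Finset.sum_congr rfl fun b _ => by ring
  simp_rw [h]
  rw [Finset.sum_comm]
  refine Finset.sum_congr rfl fun a _ => ?_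
  rw [Finset.sum_comm]
  refine Finset.sum_congr rfl fun b _ => ?_
  rw [Finset.mul_sum]

lemma step_sum (σA : FDist A) (σB : FDist B) (q : Q) :
    ∑ q', step δ dist σA σB q q' = 1 := by
  have h := step_psi δ dist σA σB q (fun _ => 1)
  simp only [mul_one] at h
  rw [h]
  have h2 : ∀ a b, lift dist (fun _ => (1:ℝ)) (δ q a b) = 1 := by
    intro a b
    unfold lift
    simp [(dist (δ q a b)).2.2]
  calc out (fun a b => lift dist (fun _ => (1:ℝ)) (δ q a b)) σA σB
      = out (fun _ _ => (1:ℝ)) σA σB := by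
        unfold out
        exact Finset.sum_congr rfl fun a _ => Finset.sum_congr rfl fun b _ => by simp [h2]
  _ = 1 := out_const 1 σA σB

lemma reachAux_zero (S : Set Q) (sA : Strat Q A) (sB : Strat Q B) (h : List Q) (q : Q) :
    reachSetNAux δ dist S 0 sA sB h q = if q ∈ S then 1 else 0 := rfl

lemma reachAux_succ (S : Set Q) (n : ℕ) (sA : Strat Q A) (sB : Strat Q B) (h : List Q) (q : Q) :
    reachSetNAux δ dist S (n+1) sA sB h q =
      if q ∈ S then 1
      else ∑ q', step δ dist (sA h q) (sB h q) q q' *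
        reachSetNAux δ dist S n sA sB (h ++ [q]) q' := rfl

lemma reachAux_nonneg (S : Set Q) (sA : Strat Q A) (sB : Strat Q B) :
    ∀ n h q, 0 ≤ reachSetNAux δ dist S n sA sB h q := by
  intro n
  induction n with
  | zero =>
      intro h q
      rw [reachAux_zero]
      split <;> norm_num
  | succ n ih =>
      intro h q
      rw [reachAux_succ]
      split
      · norm_num
      · exact Finset.sum_nonneg fun q' _ =>
          mul_nonneg (step_nonneg δ dist _ _ q q') (ih _ q')

lemma reachAux_le_one (S : Set Q) (sA : Strat Q A) (sB : Strat Q B) :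
    ∀ n h q, reachSetNAux δ dist S n sA sB h q ≤ 1 := by
  intro n
  induction n with
  | zero =>
      intro h q
      rw [reachAux_zero]
      split <;> norm_num
  | succ n ih =>
      intro h q
      rw [reachAux_succ]
      split
      · norm_num
      · calc ∑ q', step δ dist (sA h q) (sB h q) q q' *
              reachSetNAux δ dist S n sA sB (h ++ [q]) q'
            ≤ ∑ q', step δ dist (sA h q) (sB h q) q q' * 1 :=
              Finset.sum_le_sum fun q' _ =>
                mul_le_mul_of_nonneg_left (ih _ q') (step_nonneg δ dist _ _ q q')
        _ = 1 := by
          simp only [mul_one]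
          exact step_sum δ dist _ _ q

lemma reachAux_le_psi {ψ : Q → ℝ} {sA : Strat Q A} {sB : Strat Q B}
    (hψ0 : ∀ q, 0 ≤ ψ q) (hψT : 1 ≤ ψ T)
    (hstep : ∀ h q, q ≠ T →
      ∑ q', step δ dist (sA h q) (sB h q) q q' * ψ q' ≤ ψ q) :
    ∀ n h q, reachSetNAux δ dist {T} n sA sB h q ≤ ψ q := by
  intro n
  induction n with
  | zero =>
      intro h q
      rw [reachAux_zero]
      split
      · rename_i hq
        rw [Set.mem_singleton_iff] at hq
        rw [hq]; exact hψT
      · exact hψ0 q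
  | succ n ih =>
      intro h q
      rw [reachAux_succ]
      split
      · rename_i hq
        rw [Set.mem_singleton_iff] at hq
        rw [hq]; exact hψT
      · rename_i hq
        rw [Set.mem_singleton_iff] at hq
        calc ∑ q', step δ dist (sA h q) (sB h q) q q' *
              reachSetNAux δ dist {T} n sA sB (h ++ [q]) q'
            ≤ ∑ q', step δ dist (sA h q) (sB h q) q q' * ψ q' :=
              Finset.sum_le_sum fun q' _ =>
                mul_le_mul_of_nonneg_left (ih _ q') (step_nonneg δ dist _ _ q q')
        _ ≤ ψ q := hstep h q hq

lemma psi_le_reachAux {sA : Strat Q A} {sB : Strat Q B}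
    (ψ : ℕ → Q → ℝ) (P : ℕ → List Q → Q → Prop)
    (hψ1 : ∀ k q, ψ k q ≤ 1)
    (h0 : ∀ h q, P 0 h q → q ≠ T → ψ 0 q ≤ 0)
    (hstep : ∀ k h q, P (k+1) h q → q ≠ T →
        (ψ (k+1) q ≤ ∑ q', step δ dist (sA h q) (sB h q) q q' * ψ k q') ∧
        (∀ q', step δ dist (sA h q) (sB h q) q q' ≠ 0 → P k (h ++ [q]) q')) :
    ∀ k h q, P k h q → ψ k q ≤ reachSetNAux δ dist {T} k sA sB h q := by
  intro k
  induction k with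
  | zero =>
      intro h q hP
      rw [reachAux_zero]
      split
      · exact hψ1 0 q
      · rename_i hq
        rw [Set.mem_singleton_iff] at hq
        exact h0 h q hP hq
  | succ k ih =>
      intro h q hP
      rw [reachAux_succ]
      split
      · exact hψ1 _ q
      · rename_i hq
        rw [Set.mem_singleton_iff] at hq
        obtain ⟨h1, h2⟩ := hstep k h q hP hq
        refine le_trans h1 (Finset.sum_le_sum fun q' _ => ?_)
        by_cases hz : step δ dist (sA h q) (sB h q) q q' = 0
        · rw [hz, zero_mul, zero_mul]
        · exact mul_le_mul_of_nonneg_left (ih _ q' (h2 q' hz))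
            (step_nonneg δ dist _ _ q q')

lemma bddAbove_reachN (sA : Strat Q A) (sB : Strat Q B) (q : Q) :
    BddAbove (Set.range fun n => reachN δ dist T n sA sB q) :=
  ⟨1, by rintro x ⟨n, rfl⟩; exact reachAux_le_one δ dist _ sA sB n [] q⟩

lemma reachN_le_reach (n : ℕ) (sA : Strat Q A) (sB : Strat Q B) (q : Q) :
    reachN δ dist T n sA sB q ≤ reach δ dist T sA sB q :=
  le_ciSup (bddAbove_reachN δ dist T sA sB q) n

lemma reach_le {c : ℝ} {sA : Strat Q A} {sB : Strat Q B} {q : Q}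
    (h : ∀ n, reachN δ dist T n sA sB q ≤ c) : reach δ dist T sA sB q ≤ c :=
  ciSup_le h

lemma reach_nonneg (sA : Strat Q A) (sB : Strat Q B) (q : Q) :
    0 ≤ reach δ dist T sA sB q :=
  le_trans (reachAux_nonneg δ dist _ sA sB 0 [] q) (reachN_le_reach δ dist T 0 sA sB q)

lemma reach_le_one (sA : Strat Q A) (sB : Strat Q B) (q : Q) :
    reach δ dist T sA sB q ≤ 1 :=
  reach_le δ dist T fun n => reachAux_le_one δ dist _ sA sB n [] q

lemma valA_le_reach (sA : Strat Q A) (sB : Strat Q B) (q : Q) :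
    valA δ dist T sA q ≤ reach δ dist T sA sB q :=
  ciInf_le ⟨0, by rintro x ⟨sB', rfl⟩; exact reach_nonneg δ dist T sA sB' q⟩ sB

lemma le_valA {c : ℝ} {sA : Strat Q A} {q : Q}
    (h : ∀ sB, c ≤ reach δ dist T sA sB q) : c ≤ valA δ dist T sA q :=
  le_ciInf h

lemma valA_nonneg (sA : Strat Q A) (q : Q) : 0 ≤ valA δ dist T sA q :=
  le_valA δ dist T fun sB => reach_nonneg δ dist T sA sB q

lemma valA_le_one (sA : Strat Q A) (q : Q) : valA δ dist T sA q ≤ 1 :=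
  le_trans (valA_le_reach δ dist T sA (Classical.arbitrary _) q)
    (reach_le_one δ dist T sA _ q)

lemma valA_le_value (sA : Strat Q A) (q : Q) :
    valA δ dist T sA q ≤ value δ dist T q :=
  le_ciSup (f := fun sA => valA δ dist T sA q)
    ⟨1, by rintro x ⟨sA', rfl⟩; exact valA_le_one δ dist T sA' q⟩ sA

lemma value_le {c : ℝ} {q : Q} (h : ∀ sA, valA δ dist T sA q ≤ c) :
    value δ dist T q ≤ c := ciSup_le h

lemma le_value {c : ℝ} {q : Q} (sA : Strat Q A) (h : c ≤ valA δ dist T sA q) :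
    c ≤ value δ dist T q := le_trans h (valA_le_value δ dist T sA q)

lemma value_nonneg (q : Q) : 0 ≤ value δ dist T q :=
  le_value δ dist T (Classical.arbitrary _) (valA_nonneg δ dist T _ q)

end Reach

end Stmt10Aux
namespace Stmt10Aux

open CRG Finset

section ValueEq
variable {A B Q D : Type} [Fintype A] [Fintype B] [Fintype Q] [Fintype D]
  [Nonempty A] [Nonempty B]
variable (δ : Q → A → B → D) (dist : D → FDist Q) (T : Q)

lemma valStratGF_le_out (u : A → B → ℝ) (σA : FDist A) (σB : FDist B) :
    valStratGF u σA ≤ out u σA σB := by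
  rw [out_eq_sum_outB]
  exact le_convex σB.2.1 σB.2.2 (valStratGF_le_outB u σA)

lemma sum_step_sub (σA : FDist A) (σB : FDist B) (q : Q) (v : Q → ℝ) (c : ℝ) :
    ∑ q', step δ dist σA σB q q' * (v q' - c)
      = (∑ q', step δ dist σA σB q q' * v q') - c := by
  have h : ∀ q', step δ dist σA σB q q' * (v q' - c)
      = step δ dist σA σB q q' * v q' - step δ dist σA σB q q' * c := fun q' => by ring
  rw [Finset.sum_congr rfl fun q' _ => h q', Finset.sum_sub_distrib, ← Finset.sum_mul,
    step_sum δ dist σA σB q, one_mul]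

lemma Δop_eq_valGF {v : Q → ℝ} {q : Q} (hq : q ≠ T) :
    Δop δ dist T v q = valGF (locPay δ dist v q) := by
  unfold Δop locPay
  rw [if_neg hq]

lemma value_le_mval (q : Q) : value δ dist T q ≤ mval δ dist T q := by
  refine value_le δ dist T fun sA => ?_
  classical
  set m := mval δ dist T with hm
  let sB : Strat Q B := fun h q' =>
    dirac (Classical.choose (exists_valStratGF (locPay δ dist m q') (sA h q')))
  refine le_trans (valA_le_reach δ dist T sA sB q) (reach_le δ dist T fun n => ?_)
  refine reachAux_le_psi δ dist T (fun q' => (mval_mem δ dist T q').1)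
    (le_of_eq (mval_T δ dist T).symm) ?_ n [] q
  intro h q₁ hq₁
  obtain ⟨hspec, -⟩ :=
    Classical.choose_spec (exists_valStratGF (locPay δ dist m q₁) (sA h q₁))
  calc ∑ q', step δ dist (sA h q₁) (sB h q₁) q₁ q' * m q'
      = out (fun a b => lift dist m (δ q₁ a b)) (sA h q₁) (sB h q₁) :=
        step_psi δ dist _ _ q₁ m
  _ = outB (locPay δ dist m q₁) (sA h q₁)
        (Classical.choose (exists_valStratGF (locPay δ dist m q₁) (sA h q₁))) :=
        out_dirac _ _ _
  _ = valStratGF (locPay δ dist m q₁) (sA h q₁) := hspec.symm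
  _ ≤ valGF (locPay δ dist m q₁) := valStratGF_le_valGF _ _
  _ = Δop δ dist T m q₁ := (Δop_eq_valGF δ dist T hq₁).symm
  _ = m q₁ := mval_fixed δ dist T q₁

lemma mval_le_value (q₀ : Q) : mval δ dist T q₀ ≤ value δ dist T q₀ := by
  show (⨆ n, vseq δ dist T n q₀) ≤ value δ dist T q₀
  refine ciSup_le fun n => ?_
  refine le_of_forall_pos_le_add fun ε hε => ?_
  set ε' := ε / (n + 1) with hε'def
  have hε' : 0 < ε' := by positivity
  have choice : ∀ (q : Q) (k : ℕ), ∃ σ,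
      valGF (locPay δ dist (vseq δ dist T k) q) - ε'
        < valStratGF (locPay δ dist (vseq δ dist T k) q) σ :=
    fun q k => exists_lt_valStrat (sub_lt_self _ hε')
  choose σ hσ using choice
  classical
  let sA : Strat Q A := fun h q =>
    if h.length + 1 ≤ n then σ q (n - h.length - 1) else Classical.arbitrary _
  have key : vseq δ dist T n q₀ - n * ε' ≤ value δ dist T q₀ := by
    refine le_value δ dist T sA (le_valA δ dist T fun sB => ?_)
    refine le_trans ?_ (reachN_le_reach δ dist T n sA sB q₀)
    have main := psi_le_reachAux δ dist T (sA := sA) (sB := sB)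
      (fun k q => vseq δ dist T k q - k * ε') (fun k h q => h.length + k = n)
      ?_ ?_ ?_ n [] q₀ (by simp)
    · exact main
    · intro k q
      show vseq δ dist T k q - (k:ℝ) * ε' ≤ 1
      have h1 := (vseq_mem δ dist T k q).2
      have h2 : 0 ≤ (k:ℝ) * ε' := by positivity
      linarith
    · intro h q hP hq
      have h0 : vseq δ dist T 0 q = 0 := by
        unfold vseq; rw [if_neg hq]
      simp [h0]
    · intro k h q hP hq
      constructor
      · show vseq δ dist T (k + 1) q - (↑(k + 1)) * ε' ≤
            ∑ q', step δ dist (sA h q) (sB h q) q q' * (vseq δ dist T k q' - (k:ℝ) * ε')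
        have hsA : sA h q = σ q k := by
          have hlen : h.length + 1 ≤ n := by omega
          have hk : n - h.length - 1 = k := by omega
          simp only [sA]
          rw [if_pos hlen, hk]
        rw [hsA, sum_step_sub]
        have hval : valGF (locPay δ dist (vseq δ dist T k) q) = vseq δ dist T (k+1) q := by
          rw [← Δop_eq_valGF δ dist T hq]
          rfl
        have h1 := hσ q k
        rw [hval] at h1
        have h2 : ∑ q', step δ dist (σ q k) (sB h q) q q' * vseq δ dist T k q'
            = out (fun a b => lift dist (vseq δ dist T k) (δ q a b)) (σ q k) (sB h q) :=
          step_psi δ dist _ _ q _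
        have h3 := valStratGF_le_out (locPay δ dist (vseq δ dist T k) q) (σ q k) (sB h q)
        have h4 : out (locPay δ dist (vseq δ dist T k) q) (σ q k) (sB h q)
            = out (fun a b => lift dist (vseq δ dist T k) (δ q a b)) (σ q k) (sB h q) := rfl
        push_cast
        rw [h2]
        rw [h4] at h3
        linarith
      · intro q' _
        simp only [List.length_append, List.length_cons, List.length_nil]
        omega
  have hnε : (n:ℝ) * ε' ≤ ε := by
    have h1 : (n:ℝ) * ε' ≤ ((n:ℝ) + 1) * ε' := by nlinarith
    have h2 : ((n:ℝ) + 1) * ε' = ε := by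
      rw [hε'def]
      field_simp
    linarith
  linarith

lemma value_eq_mval (q : Q) : value δ dist T q = mval δ dist T q :=
  le_antisymm (value_le_mval δ dist T q) (mval_le_value δ dist T q)

end ValueEq

end Stmt10Aux
namespace Stmt10Aux

open CRG Finset

section Forward
variable {A B O : Type} [Fintype A] [Fintype B] [Nonempty A] [Nonempty B] [Fintype O]
variable (ρ : A → B → O) (E : Set O) (α : O → ℝ)
variable (hα : ∀ o ∉ E, α o ∈ Set.Icc (0:ℝ) 1)

lemma valGF_const (c : ℝ) : valGF (fun (_ : A) (_ : B) => c) = c := by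
  have h1 : valGF (fun (_ : A) (_ : B) => c) ≤ c := valGF_le_of_forall fun _ _ => le_rfl
  have h2 : c ≤ valGF (fun (_ : A) (_ : B) => c) := le_valGF_of_forall fun _ _ => le_rfl
  linarith

lemma triδ_zero (a : A) (b : B) :
    triδ ρ E 0 a b = if h : ρ a b ∈ E then Sum.inl 0 else Sum.inr ⟨ρ a b, h⟩ := by
  unfold triδ
  rw [if_pos rfl]

lemma triδ_ns (s : Fin 3) (hs : s ≠ 0) (a : A) (b : B) :
    triδ ρ E s a b = Sum.inl s := by
  unfold triδ
  rw [if_neg hs]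

lemma lift_inl (ψ : Fin 3 → ℝ) (t : Fin 3) :
    lift (triDist E α hα) ψ (Sum.inl t) = ψ t := by
  have h : triDist E α hα (Sum.inl t) = dirac t := rfl
  unfold lift
  rw [h]
  exact sum_dirac_mul t ψ

lemma lift_inr (ψ : Fin 3 → ℝ) (x : {o : O // o ∉ E}) :
    lift (triDist E α hα) ψ (Sum.inr x) = α x.1 * ψ 1 + (1 - α x.1) * ψ 2 := by
  show ∑ q, (⟨![0, α x.1, 1 - α x.1], _⟩ : FDist (Fin 3)).1 q * ψ q = _
  rw [Fin.sum_univ_three]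
  simp only [Matrix.cons_val_zero, Matrix.cons_val_one, Matrix.head_cons,
    Matrix.cons_val_two, Matrix.tail_cons]
  ring

lemma payoff_zero (ψ : Fin 3 → ℝ) (hψ1 : ψ 1 = 1) (hψ2 : ψ 2 = 0) {y : ℝ}
    (hy : ψ 0 = y) (a : A) (b : B) :
    lift (triDist E α hα) ψ (triδ ρ E 0 a b) = extendVal E α y (ρ a b) := by
  rw [triδ_zero]
  unfold extendVal
  by_cases h : ρ a b ∈ E
  · rw [dif_pos h, if_pos h, lift_inl, hy]
  · rw [dif_neg h, if_neg h, lift_inr, hψ1, hψ2]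
    ring

lemma payoff_ns (ψ : Fin 3 → ℝ) (s : Fin 3) (hs : s ≠ 0) (a : A) (b : B) :
    lift (triDist E α hα) ψ (triδ ρ E s a b) = ψ s := by
  rw [triδ_ns ρ E s hs, lift_inl]

/-- Identification of the value iteration on the tri-game with the iteration of `fval`. -/
lemma tri_vseq : ∀ n, (vseq (triδ ρ E) (triDist E α hα) 1 n 0 = iter (fval ρ E α) n)
    ∧ vseq (triδ ρ E) (triDist E α hα) 1 n 2 = 0 := by
  intro n
  induction n with
  | zero =>
      constructor
      · simp only [vseq]
        rw [if_neg (show ¬(0:Fin 3) = 1 by decide)]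
        rfl
      · simp only [vseq]
        rw [if_neg (show ¬(2:Fin 3) = 1 by decide)]
  | succ n ih =>
      have hT1 : vseq (triδ ρ E) (triDist E α hα) 1 n 1 = 1 := vseq_T _ _ _ n
      constructor
      · show Δop (triδ ρ E) (triDist E α hα) 1 (vseq (triδ ρ E) (triDist E α hα) 1 n) 0
          = fval ρ E α (iter (fval ρ E α) n)
        unfold Δop
        rw [if_neg (show ¬(0:Fin 3) = 1 by decide)]
        have heq : (fun a b => lift (triDist E α hα) (vseq (triδ ρ E) (triDist E α hα) 1 n)
            (triδ ρ E 0 a b)) = fun a b => extendVal E α (iter (fval ρ E α) n) (ρ a b) := by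
          funext a b
          exact payoff_zero ρ E α hα _ hT1 ih.2 ih.1 a b
        rw [heq]
        rfl
      · show Δop (triδ ρ E) (triDist E α hα) 1 (vseq (triδ ρ E) (triDist E α hα) 1 n) 2
          = 0
        unfold Δop
        rw [if_neg (show ¬(2:Fin 3) = 1 by decide)]
        have heq : (fun a b => lift (triDist E α hα) (vseq (triδ ρ E) (triDist E α hα) 1 n)
            (triδ ρ E 2 a b)) = fun (_ : A) (_ : B) => (0:ℝ) := by
          funext a b
          rw [payoff_ns ρ E α hα _ 2 (by decide) a b, ih.2]
        rw [heq, valGF_const]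

lemma tri_mval : mval (triδ ρ E) (triDist E α hα) 1 0 = lfp (fval ρ E α) := by
  unfold mval lfp
  exact iSup_congr fun n => (tri_vseq ρ E α hα n).1

/-- Upper bound on reach probabilities via the potential ![v,1,0]. -/
lemma tri_upper {sA : Strat (Fin 3) A} {sB : Strat (Fin 3) B} {v : ℝ} (hv0 : 0 ≤ v)
    (hsB : ∀ h, ∃ b, sB h 0 = dirac b ∧
        outB (fun a b => extendVal E α v (ρ a b)) (sA h 0) b ≤ v) :
    ∀ n h q, reachSetNAux (triδ ρ E) (triDist E α hα) {1} n sA sB h q ≤ ![v,1,0] q := by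
  have htri : ∀ x : Fin 3, x = 0 ∨ x = 1 ∨ x = 2 := by decide
  refine reachAux_le_psi (triδ ρ E) (triDist E α hα) 1 ?_ ?_ ?_
  · intro q
    rcases htri q with rfl | rfl | rfl
    · simpa using hv0
    · norm_num
    · show (0:ℝ) ≤ 0; norm_num
  · norm_num
  · intro h q hq
    rcases htri q with rfl | rfl | rfl
    · obtain ⟨b, hb, hout⟩ := hsB h
      rw [hb]
      calc ∑ q', step (triδ ρ E) (triDist E α hα) (sA h 0) (dirac b) 0 q' * ![v,1,0] q'
          = out (fun a b => lift (triDist E α hα) ![v,1,0] (triδ ρ E 0 a b)) (sA h 0)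
              (dirac b) := step_psi _ _ _ _ _ _
      _ = out (fun a b => extendVal E α v (ρ a b)) (sA h 0) (dirac b) := by
            congr 1
            funext a' b'
            exact payoff_zero ρ E α hα _ (by simp) (by simp) (by simp) a' b'
      _ = outB (fun a b => extendVal E α v (ρ a b)) (sA h 0) b := out_dirac _ _ _
      _ ≤ v := hout
      _ = ![v,1,0] 0 := by simp
    · exact absurd rfl hq
    · calc ∑ q', step (triδ ρ E) (triDist E α hα) (sA h 2) (sB h 2) 2 q' * ![v,1,0] q'
          = out (fun a b => lift (triDist E α hα) ![v,1,0] (triδ ρ E 2 a b)) (sA h 2)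
              (sB h 2) := step_psi _ _ _ _ _ _
      _ = out (fun (_ : A) (_ : B) => ![v,1,0] 2) (sA h 2) (sB h 2) := by
            congr 1
            funext a' b'
            exact payoff_ns ρ E α hα _ 2 (by decide) a' b'
      _ = ![v,1,0] 2 := out_const _ _ _
      _ ≤ ![v,1,0] 2 := le_rfl

/-- Trap step: if all actions in the support lead to outcomes in `E`,
the play returns surely to state 0. -/
lemma tri_trap {σA : FDist A} {b : B} (htrap : ∀ a ∈ supp σA, ρ a b ∈ E)
    (r : Fin 3 → ℝ) :
    ∑ q', step (triδ ρ E) (triDist E α hα) σA (dirac b) 0 q' * r q' = r 0 := by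
  rw [step_psi, out_dirac]
  unfold outB
  have h : ∀ a, σA.1 a * lift (triDist E α hα) r (triδ ρ E 0 a b) = σA.1 a * r 0 := by
    intro a
    by_cases ha : σA.1 a = 0
    · rw [ha, zero_mul, zero_mul]
    · have hE : ρ a b ∈ E := htrap a ha
      rw [triδ_zero, dif_pos hE, lift_inl]
  rw [Finset.sum_congr rfl fun a _ => h a, ← Finset.sum_mul, σA.2.2, one_mul]

end Forward

end Stmt10Aux
namespace Stmt10Aux

open CRG Finset

section ForwardMain
variable {A B O : Type} [Fintype A] [Fintype B] [Nonempty A] [Nonempty B] [Fintype O]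

lemma forward_RMwrt (ρ : A → B → O) (E : Set O) (α : O → ℝ)
    (hα : ∀ o ∉ E, α o ∈ Set.Icc (0:ℝ) 1)
    (hMax : Maximizable (triδ ρ E) (triDist E α hα) 1 0) :
    RMwrt ρ E α := by
  intro v hv
  by_cases hv0 : v = 0
  · exact Or.inl hv0
  right
  by_contra hcon
  push_neg at hcon
  have hfix : valGF (fun a b => extendVal E α v (ρ a b)) = v := hv.2.1
  set u := fun a b => extendVal E α v (ρ a b) with hu
  have hv01 := hv.1
  have hu0 : ∀ a b, 0 ≤ u a b := by
    intro a b
    show 0 ≤ extendVal E α v (ρ a b)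
    simp only [extendVal]
    by_cases h : ρ a b ∈ E
    · rw [if_pos h]; exact hv01.1
    · rw [if_neg h]; exact (hα _ h).1
  have h0T : (0:Fin 3) ∉ ({1} : Set (Fin 3)) := by
    simp only [Set.mem_singleton_iff]
    decide
  have hveq : v = lfp (fval ρ E α) := isLfpVal_eq_lfp hα hv
  have hvalue : value (triδ ρ E) (triDist E α hα) 1 0 = v := by
    rw [value_eq_mval, tri_mval, ← hveq]
  obtain ⟨sA, hsA⟩ := hMax
  have hvalA : valA (triδ ρ E) (triDist E α hα) 1 sA 0 = v := by rw [hsA, hvalue]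
  classical
  let bsel : List (Fin 3) → B := fun h =>
    if hopt : sA h 0 ∈ OptA u then Classical.choose (hcon (sA h 0) hopt)
    else Classical.choose (exists_valStratGF u (sA h 0))
  let sB : Strat (Fin 3) B := fun h q => if q = 0 then dirac (bsel h) else Classical.arbitrary _
  have hsB0 : ∀ h, sB h 0 = dirac (bsel h) := fun h => by simp only [sB, if_pos rfl]
  have houtB : ∀ h, outB u (sA h 0) (bsel h) ≤ v := by
    intro h
    by_cases hopt : sA h 0 ∈ OptA u
    · have hb : bsel h = Classical.choose (hcon (sA h 0) hopt) := by
        simp only [bsel, dif_pos hopt]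
      have hspec := Classical.choose_spec (hcon (sA h 0) hopt)
      rw [hb]
      have h1 : outB u (sA h 0) (Classical.choose (hcon (sA h 0) hopt))
          = valStratGF u (sA h 0) := hspec.1
      rw [h1]
      have h2 : valStratGF u (sA h 0) = valGF u := hopt
      rw [h2, hfix]
    · have hb : bsel h = Classical.choose (exists_valStratGF u (sA h 0)) := by
        simp only [bsel, dif_neg hopt]
      rw [hb]
      obtain ⟨heq, -⟩ := Classical.choose_spec (exists_valStratGF u (sA h 0))
      rw [← heq, ← hfix]
      exact valStratGF_le_valGF u (sA h 0)
  have hupper := tri_upper ρ E α hα (sA := sA) (sB := sB) hv01.1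
    (fun h => ⟨bsel h, hsB0 h, houtB h⟩)
  have hreach : reach (triδ ρ E) (triDist E α hα) 1 sA sB 0 < v := by
    by_cases hall : ∀ k, sA (List.replicate k 0) 0 ∈ OptA u
    · have hzero : ∀ n k, reachSetNAux (triδ ρ E) (triDist E α hα) {1} n sA sB
          (List.replicate k 0) 0 = 0 := by
        intro n
        induction n with
        | zero =>
            intro k
            rw [reachAux_zero, if_neg h0T]
        | succ n ih =>
            intro k
            rw [reachAux_succ, if_neg h0T]
            have hb : bsel (List.replicate k 0) = Classical.choose (hcon _ (hall k)) := by
              simp only [bsel, dif_pos (hall k)]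
            have hspec := Classical.choose_spec (hcon _ (hall k))
            rw [hsB0, hb, tri_trap ρ E α hα hspec.2, ← List.replicate_succ']
            exact ih (k+1)
      have hle : reach (triδ ρ E) (triDist E α hα) 1 sA sB 0 ≤ 0 :=
        reach_le _ _ _ (fun n => le_of_eq (hzero n 0))
      have hvpos : 0 < v := lt_of_le_of_ne hv01.1 (Ne.symm hv0)
      linarith
    · push_neg at hall
      have hex : ∃ k, sA (List.replicate k 0) 0 ∉ OptA u := hall
      have hk₀spec : sA (List.replicate (Nat.find hex) 0) 0 ∉ OptA u := Nat.find_spec hex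
      have hk₀min : ∀ j < Nat.find hex, sA (List.replicate j 0) 0 ∈ OptA u :=
        fun j hj => not_not.1 (Nat.find_min hex hj)
      set k₀ := Nat.find hex
      set w := valStratGF u (sA (List.replicate k₀ 0) 0) with hw
      have hwlt : w < v := by
        have hle : w ≤ valGF u := valStratGF_le_valGF u _
        have hne : w ≠ valGF u := hk₀spec
        rw [hfix] at hle hne
        exact lt_of_le_of_ne hle hne
      have hw0 : 0 ≤ w :=
        le_valStratGF u _ (fun b => le_outB (fun a b => hu0 a b) _ b)
      have hclaim : ∀ n, ∀ j ≤ k₀, reachSetNAux (triδ ρ E) (triDist E α hα) {1} n sA sB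
          (List.replicate j 0) 0 ≤ w := by
        intro n
        induction n with
        | zero =>
            intro j hj
            rw [reachAux_zero, if_neg h0T]
            exact hw0
        | succ n ih =>
            intro j hj
            rw [reachAux_succ, if_neg h0T]
            by_cases hjlt : j < k₀
            · have hopt := hk₀min j hjlt
              have hb : bsel (List.replicate j 0) = Classical.choose (hcon _ hopt) := by
                simp only [bsel, dif_pos hopt]
              have hspec := Classical.choose_spec (hcon _ hopt)
              rw [hsB0, hb, tri_trap ρ E α hα hspec.2, ← List.replicate_succ']
              exact ih (j+1) hjlt
            · have hj0 : j = k₀ := le_antisymm hj (not_lt.1 hjlt)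
              rw [hj0]
              have hb : bsel (List.replicate k₀ 0)
                  = Classical.choose (exists_valStratGF u (sA (List.replicate k₀ 0) 0)) := by
                simp only [bsel, dif_neg hk₀spec]
              obtain ⟨heq, -⟩ :=
                Classical.choose_spec (exists_valStratGF u (sA (List.replicate k₀ 0) 0))
              rw [hsB0, hb]
              calc ∑ q', step (triδ ρ E) (triDist E α hα) (sA (List.replicate k₀ 0) 0)
                    (dirac (Classical.choose (exists_valStratGF u (sA (List.replicate k₀ 0) 0))))
                    0 q' * reachSetNAux (triδ ρ E) (triDist E α hα) {1} n sA sB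
                      (List.replicate k₀ 0 ++ [0]) q'
                  ≤ ∑ q', step (triδ ρ E) (triDist E α hα) (sA (List.replicate k₀ 0) 0)
                    (dirac (Classical.choose (exists_valStratGF u (sA (List.replicate k₀ 0) 0))))
                    0 q' * ![v,1,0] q' := by
                    refine Finset.sum_le_sum fun q' _ => ?_
                    exact mul_le_mul_of_nonneg_left (hupper n _ q')
                      (step_nonneg _ _ _ _ 0 q')
              _ = out (fun a b => lift (triDist E α hα) ![v,1,0] (triδ ρ E 0 a b))
                    (sA (List.replicate k₀ 0) 0)
                    (dirac (Classical.choose (exists_valStratGF u (sA (List.replicate k₀ 0) 0)))) :=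
                    step_psi _ _ _ _ _ _
              _ = out u (sA (List.replicate k₀ 0) 0)
                    (dirac (Classical.choose (exists_valStratGF u (sA (List.replicate k₀ 0) 0)))) := by
                    have heq2 : (fun a b => lift (triDist E α hα) ![v,1,0] (triδ ρ E 0 a b)) = u := by
                      rw [hu]
                      funext a' b'
                      exact payoff_zero ρ E α hα _ (by simp) (by simp) (by simp) a' b'
                    rw [heq2]
              _ = outB u (sA (List.replicate k₀ 0) 0)
                    (Classical.choose (exists_valStratGF u (sA (List.replicate k₀ 0) 0))) :=
                    out_dirac _ _ _
              _ = w := heq.symm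
      have hle : reach (triδ ρ E) (triDist E α hα) 1 sA sB 0 ≤ w :=
        reach_le _ _ _ (fun n => hclaim n 0 (Nat.zero_le _))
      linarith
  have hge : v ≤ reach (triδ ρ E) (triDist E α hα) 1 sA sB 0 := by
    rw [← hvalA]
    exact valA_le_reach _ _ _ sA sB 0
  linarith

end ForwardMain

end Stmt10Aux
namespace Stmt10Aux

open CRG Finset

section Basic2
variable {X : Type} [Fintype X]

lemma convex_le' {w f : X → ℝ} {c : ℝ} (hw : ∀ x, 0 ≤ w x) (hsum : ∑ x, w x = 1)
    (hf : ∀ x, w x ≠ 0 → f x ≤ c) : ∑ x, w x * f x ≤ c := by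
  have hterm : ∀ x, w x * f x ≤ w x * c := by
    intro x
    by_cases hz : w x = 0
    · rw [hz, zero_mul, zero_mul]
    · exact mul_le_mul_of_nonneg_left (hf x hz) (hw x)
  calc ∑ x, w x * f x ≤ ∑ x, w x * c := Finset.sum_le_sum fun x _ => hterm x
  _ = c := by rw [← Finset.sum_mul, hsum, one_mul]

lemma convex_eq' {w f : X → ℝ} {c : ℝ} (hw : ∀ x, 0 ≤ w x) (hsum : ∑ x, w x = 1)
    (hf : ∀ x, w x ≠ 0 → f x ≤ c) (heq : c ≤ ∑ x, w x * f x) :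
    ∀ x, w x ≠ 0 → f x = c := by
  intro x hx
  by_contra hne
  have hlt : f x < c := lt_of_le_of_ne (hf x hx) hne
  have hxpos : 0 < w x := lt_of_le_of_ne (hw x) (Ne.symm hx)
  have hterm : ∀ y, w y * f y ≤ w y * c := by
    intro y
    by_cases hz : w y = 0
    · rw [hz, zero_mul, zero_mul]
    · exact mul_le_mul_of_nonneg_left (hf y hz) (hw y)
  have hstrict : ∑ y, w y * f y < ∑ y, w y * c := by
    apply Finset.sum_lt_sum (fun y _ => hterm y)
    exact ⟨x, Finset.mem_univ x, by nlinarith⟩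
  rw [← Finset.sum_mul, hsum, one_mul] at hstrict
  linarith

end Basic2

section Secure
variable {A B Q D : Type} [Fintype A] [Fintype B] [Fintype Q] [Fintype D]
  [Nonempty A] [Nonempty B]
variable (δ : Q → A → B → D) (dist : D → FDist Q) (T : Q)

lemma natS_mono {S S' : Set Q} (h : S ⊆ S') : natS dist S ⊆ natS dist S' := by
  rintro d ⟨q, hq, hd⟩
  exact ⟨q, h hq, hd⟩

lemma SecN_succ (mv : Q → ℝ) (Bd : Set Q) (n : ℕ) :
    SecN δ dist mv T Bd n ⊆ SecN δ dist mv T Bd (n+1) :=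
  fun x hx => Or.inl hx

lemma SecN_mono (mv : Q → ℝ) (Bd : Set Q) {n k : ℕ} (h : n ≤ k) :
    SecN δ dist mv T Bd n ⊆ SecN δ dist mv T Bd k := by
  induction k with
  | zero =>
      obtain rfl := Nat.le_zero.mp h
      exact subset_rfl
  | succ k ih =>
      by_cases hnk : n ≤ k
      · exact (ih hnk).trans (SecN_succ δ dist T mv Bd k)
      · have : n = k + 1 := by omega
        subst this
        exact subset_rfl

lemma mpos_subset_G
    (hRM : ∀ (q : Q) (E : Set D) (α : D → ℝ),
      (∀ d ∉ E, α d ∈ Set.Icc (0:ℝ) 1) → RMwrt (δ q) E α) :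
    ∀ q, 0 < mval δ dist T q → q ∈ ⋃ n, SecN δ dist (mval δ dist T) T ∅ n := by
  classical
  by_contra hcon
  push_neg at hcon
  obtain ⟨q₀, hq₀pos, hq₀G⟩ := hcon
  set m := mval δ dist T with hm
  set G := ⋃ n, SecN δ dist m T ∅ n with hG
  have hGc : (Finset.univ.filter (fun q => q ∉ G)).Nonempty :=
    ⟨q₀, Finset.mem_filter.mpr ⟨Finset.mem_univ _, hq₀G⟩⟩
  obtain ⟨q₁, hq₁mem, hq₁max⟩ := Finset.exists_max_image _ m hGc
  set lam := m q₁ with hlam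
  have hq₁G : q₁ ∉ G := (Finset.mem_filter.mp hq₁mem).2
  have hmax : ∀ q, q ∉ G → m q ≤ lam := fun q hq =>
    hq₁max q (Finset.mem_filter.mpr ⟨Finset.mem_univ q, hq⟩)
  have hlampos : 0 < lam := lt_of_lt_of_le hq₀pos (hmax q₀ hq₀G)
  have hlam1 : lam ≤ 1 := (mval_mem δ dist T q₁).2
  have hTG : T ∈ G := by
    rw [hG]
    exact Set.mem_iUnion.mpr ⟨0, rfl⟩
  set W := {q | q ∉ G ∧ m q = lam} with hW
  have hq₁W : q₁ ∈ W := ⟨hq₁G, rfl⟩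
  have hWT : ∀ q ∈ W, q ≠ T := fun q hq hqT => hq.1 (hqT ▸ hTG)
  set E₁ := {d : D | ∀ q', (dist d).1 q' ≠ 0 → q' ∈ W} with hE₁
  set α₁ := fun d => lift dist m d with hα₁def
  have hα₁ : ∀ d ∉ E₁, α₁ d ∈ Set.Icc (0:ℝ) 1 := fun d _ =>
    ⟨lift_nonneg dist (fun q => (mval_mem δ dist T q).1) d,
     lift_le dist (fun q => (mval_mem δ dist T q).2) d⟩
  have hmfix : ∀ q, q ≠ T → valGF (locPay δ dist m q) = m q := by
    intro q hq
    rw [← Δop_eq_valGF δ dist T hq]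
    exact mval_fixed δ dist T q
  have hliftE : ∀ d ∈ E₁, lift dist m d = lam := by
    intro d hd
    unfold lift
    calc ∑ q', (dist d).1 q' * m q' = ∑ q', (dist d).1 q' * lam := by
          refine Finset.sum_congr rfl fun q' _ => ?_
          by_cases hz : (dist d).1 q' = 0
          · rw [hz, zero_mul, zero_mul]
          · rw [(hd q' hz).2]
    _ = lam := by rw [← Finset.sum_mul, (dist d).2.2, one_mul]
  have hpay : ∀ q, (fun a b => extendVal E₁ α₁ lam (δ q a b)) = locPay δ dist m q := by
    intro q
    funext a b
    show extendVal E₁ α₁ lam (δ q a b) = lift dist m (δ q a b)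
    unfold extendVal
    by_cases hd : δ q a b ∈ E₁
    · rw [if_pos hd, hliftE _ hd]
    · rw [if_neg hd]
  have hfixlam : ∀ q ∈ W, fval (δ q) E₁ α₁ lam = lam := by
    intro q hq
    show valGF (fun a b => extendVal E₁ α₁ lam (δ q a b)) = lam
    rw [hpay q, hmfix q (hWT q hq)]
    exact hq.2
  have hnice : ∀ q : Q, NiceFun (fval (δ q) E₁ α₁) := fun q => fval_nice _ _ _ hα₁
  have hexist : ∃ qs ∈ W, lfp (fval (δ qs) E₁ α₁) = lam := by
    by_contra hno
    push_neg at hno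
    set WF := Finset.univ.filter (fun q => q ∈ W) with hWF
    have hWFne : WF.Nonempty := ⟨q₁, Finset.mem_filter.mpr ⟨Finset.mem_univ _, hq₁W⟩⟩
    obtain ⟨qh, hqhWF, hqhmax⟩ :=
      Finset.exists_max_image WF (fun q => lfp (fval (δ q) E₁ α₁)) hWFne
    have hqhW : qh ∈ W := (Finset.mem_filter.mp hqhWF).2
    set vb := lfp (fval (δ qh) E₁ α₁) with hvb
    have hvb_lt : vb < lam :=
      lt_of_le_of_ne
        (lfp_le_pre (hnice qh) (le_of_lt hlampos) (le_of_eq (hfixlam qh hqhW)))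
        (hno qh hqhW)
    have hvb0 : 0 ≤ vb := (lfp_mem (hnice qh)).1
    have hvW : ∀ q ∈ W, lfp (fval (δ q) E₁ α₁) ≤ vb := fun q hq =>
      hqhmax q (Finset.mem_filter.mpr ⟨Finset.mem_univ q, hq⟩)
    set m' := fun q => if q ∈ W then vb else m q with hm'
    have hm'le : ∀ q, m' q ≤ m q := by
      intro q
      simp only [hm']
      by_cases hq : q ∈ W
      · rw [if_pos hq]
        calc vb ≤ lam := le_of_lt hvb_lt
        _ = m q := hq.2.symm
      · rw [if_neg hq]
    have hm'0 : ∀ q, 0 ≤ m' q := by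
      intro q
      simp only [hm']
      by_cases hq : q ∈ W
      · rw [if_pos hq]; exact hvb0
      · rw [if_neg hq]; exact (mval_mem δ dist T q).1
    have hm'pre : ∀ q, Δop δ dist T m' q ≤ m' q := by
      intro q
      by_cases hq : q ∈ W
      · have hqT := hWT q hq
        rw [Δop_eq_valGF δ dist T hqT]
        have hpt : ∀ a b, lift dist m' (δ q a b) ≤ extendVal E₁ α₁ vb (δ q a b) := by
          intro a b
          unfold extendVal
          by_cases hd : δ q a b ∈ E₁
          · rw [if_pos hd]
            refine convex_le' (dist _).2.1 (dist _).2.2 fun q' hz => ?_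
            have hq'W := hd q' hz
            simp only [hm']
            rw [if_pos hq'W]
          · rw [if_neg hd]
            exact lift_mono dist hm'le _
        have h1 : valGF (locPay δ dist m' q)
            ≤ valGF (fun a b => extendVal E₁ α₁ vb (δ q a b)) := valGF_mono hpt
        have h2 : fval (δ q) E₁ α₁ vb ≤ vb := by
          have hlip := (hnice q).lip (hvW q hq)
          rw [lfp_fixed (hnice q)] at hlip
          linarith
        calc valGF (locPay δ dist m' q)
            ≤ fval (δ q) E₁ α₁ vb := h1
        _ ≤ vb := h2
        _ = m' q := by simp only [hm']; rw [if_pos hq]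
      · calc Δop δ dist T m' q ≤ Δop δ dist T m q := Δop_mono δ dist T hm'le q
        _ = m q := mval_fixed δ dist T q
        _ = m' q := by simp only [hm']; rw [if_neg hq]
    have hleast := mval_least δ dist T hm'0 hm'pre q₁
    simp only [hm'] at hleast
    rw [if_pos hq₁W] at hleast
    have : lam ≤ vb := hleast
    linarith
  obtain ⟨qs, hqsW, hqslfp⟩ := hexist
  have hislfp : IsLfpVal (δ qs) E₁ α₁ lam := by
    refine ⟨⟨le_of_lt hlampos, hlam1⟩, hfixlam qs hqsW, fun y hy hfix => ?_⟩
    rw [← hqslfp]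
    exact lfp_le_pre (hnice qs) hy.1 (le_of_eq hfix)
  rcases hRM qs E₁ α₁ hα₁ lam hislfp with hlam0 | ⟨σA, hσOpt, hσesc⟩
  · linarith
  rw [hpay qs] at hσOpt hσesc
  have hprog : ∀ b ∈ optActs (locPay δ dist m qs) σA,
      ∃ n, ∃ a ∈ supp σA, δ qs a b ∈ natS dist (SecN δ dist m T ∅ n) := by
    intro b hb
    by_contra hnob
    push_neg at hnob
    have hsupp : ∀ a, σA.1 a ≠ 0 → ∀ q', (dist (δ qs a b)).1 q' ≠ 0 → q' ∉ G := by
      intro a ha q' hq' hq'G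
      rw [hG] at hq'G
      obtain ⟨s, hmem⟩ := Set.mem_iUnion.mp hq'G
      exact hnob s a ha ⟨q', hmem, hq'⟩
    have houtBeq : outB (locPay δ dist m qs) σA b = lam := by
      have h1 : outB (locPay δ dist m qs) σA b = valStratGF (locPay δ dist m qs) σA := hb
      have h2 : valStratGF (locPay δ dist m qs) σA = valGF (locPay δ dist m qs) := hσOpt
      rw [h1, h2, hmfix qs (hWT qs hqsW)]
      exact hqsW.2
    have hle : ∀ a', σA.1 a' ≠ 0 → lift dist m (δ qs a' b) ≤ lam := by
      intro a' ha'
      refine convex_le' (dist _).2.1 (dist _).2.2 fun q' hz => ?_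
      exact hmax q' (hsupp a' ha' q' hz)
    have hain : ∀ a, σA.1 a ≠ 0 → δ qs a b ∈ E₁ := by
      intro a ha
      have heqa := convex_eq' σA.2.1 σA.2.2 hle (le_of_eq houtBeq.symm) a ha
      intro q' hz
      refine ⟨hsupp a ha q' hz, ?_⟩
      exact convex_eq' (dist _).2.1 (dist _).2.2
        (fun q'' hz' => hmax q'' (hsupp a ha q'' hz')) (le_of_eq heqa.symm) q' hz
    obtain ⟨a, ha, hesc⟩ := hσesc b hb
    exact hesc (hain a ha)
  have hband : ∀ b : B, ∃ n, b ∈ optActs (locPay δ dist m qs) σA →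
      ∃ a ∈ supp σA, δ qs a b ∈ natS dist (SecN δ dist m T ∅ n) := by
    intro b
    by_cases hb : b ∈ optActs (locPay δ dist m qs) σA
    · obtain ⟨n, hn⟩ := hprog b hb
      exact ⟨n, fun _ => hn⟩
    · exact ⟨0, fun h => absurd h hb⟩
  choose nb hnb using hband
  have hProg : σA ∈ Prog δ dist m qs (SecN δ dist m T ∅ (Finset.univ.sup nb)) := by
    refine ⟨hσOpt, fun b hb => ?_⟩
    obtain ⟨a, ha, hmem⟩ := hnb b hb
    exact ⟨a, ha, natS_mono dist
      (SecN_mono δ dist T m ∅ (Finset.le_sup (Finset.mem_univ b))) hmem⟩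
  have hnotRisk : σA ∉ Risk δ dist m qs ∅ := by
    rintro ⟨-, b, -, a, -, hmem⟩
    obtain ⟨q', hq', -⟩ := hmem
    exact hq'
  have hqsSec : qs ∈ SecN δ dist m T ∅ (Finset.univ.sup nb + 1) :=
    Or.inr ⟨Set.notMem_empty qs, ⟨σA, hProg, hnotRisk⟩⟩
  refine hqsW.1 ?_
  rw [hG]
  exact Set.mem_iUnion.mpr ⟨Finset.univ.sup nb + 1, hqsSec⟩

end Secure

end Stmt10Aux
namespace Stmt10Aux

open CRG Finset

section OptStrat
variable {A B Q D : Type} [Fintype A] [Fintype B] [Fintype Q] [Fintype D]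
  [Nonempty A] [Nonempty B]
variable (δ : Q → A → B → D) (dist : D → FDist Q) (T : Q)

lemma step_dirac_psi (σA : FDist A) (b : B) (q : Q) (r : Q → ℝ) :
    ∑ q', step δ dist σA (dirac b) q q' * r q'
      = outB (fun a b' => lift dist r (δ q a b')) σA b := by
  rw [step_psi, out_dirac]

lemma step_dirac_apply (σA : FDist A) (b : B) (q q' : Q) :
    step δ dist σA (dirac b) q q' = ∑ a, σA.1 a * (dist (δ q a b)).1 q' := by
  unfold step
  refine Finset.sum_congr rfl fun a _ => ?_
  calc ∑ b', σA.1 a * (dirac b).1 b' * (dist (δ q a b')).1 q'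
      = ∑ b', (dirac b).1 b' * (σA.1 a * (dist (δ q a b')).1 q') :=
        Finset.sum_congr rfl fun b' _ => by ring
  _ = σA.1 a * (dist (δ q a b)).1 q' := sum_dirac_mul b _

variable (σs : Q → FDist A)

/-- One-step Bellman min operator of the induced MDP. -/
def Vop (f : Q → ℝ) : Q → ℝ := fun q => if q = T then 1 else
  Finset.univ.inf' Finset.univ_nonempty
    (fun b : B => ∑ q', step δ dist (σs q) (dirac b) q q' * f q')

/-- Finite-horizon min-reach values of the MDP induced by the positional strategy. -/
def Vmin : ℕ → Q → ℝ
  | 0 => fun q => if q = T then 1 else 0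
  | n+1 => Vop δ dist T σs (Vmin n)

lemma Vmin_T : ∀ n, Vmin δ dist T σs n T = 1
  | 0 => by show (if T = T then (1:ℝ) else 0) = 1; rw [if_pos rfl]
  | n+1 => by show Vop δ dist T σs _ T = 1; unfold Vop; rw [if_pos rfl]

lemma Vmin_ns {q : Q} (hq : q ≠ T) (n : ℕ) :
    Vmin δ dist T σs (n+1) q = Finset.univ.inf' Finset.univ_nonempty
      (fun b : B => ∑ q', step δ dist (σs q) (dirac b) q q' * Vmin δ dist T σs n q') := by
  show Vop δ dist T σs _ q = _
  unfold Vop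
  rw [if_neg hq]

lemma Vmin_mem : ∀ n q, 0 ≤ Vmin δ dist T σs n q ∧ Vmin δ dist T σs n q ≤ 1 := by
  intro n
  induction n with
  | zero =>
      intro q
      unfold Vmin
      split <;> norm_num
  | succ n ih =>
      intro q
      by_cases hq : q = T
      · rw [hq, Vmin_T]; norm_num
      · rw [Vmin_ns δ dist T σs hq]
        constructor
        · refine Finset.le_inf' _ _ fun b _ => ?_
          exact Finset.sum_nonneg fun q' _ => mul_nonneg (step_nonneg δ dist _ _ q q')
            (ih q').1
        · refine le_trans (Finset.inf'_le _ (Finset.mem_univ (Classical.arbitrary B))) ?_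
          calc ∑ q', step δ dist (σs q) (dirac (Classical.arbitrary B)) q q'
                * Vmin δ dist T σs n q'
              ≤ ∑ q', step δ dist (σs q) (dirac (Classical.arbitrary B)) q q' * 1 :=
                Finset.sum_le_sum fun q' _ =>
                  mul_le_mul_of_nonneg_left (ih q').2 (step_nonneg δ dist _ _ q q')
          _ = 1 := by
                simp only [mul_one]
                exact step_sum δ dist _ _ q
  
lemma Vmin_mono : ∀ n q, Vmin δ dist T σs n q ≤ Vmin δ dist T σs (n+1) q := by
  intro n
  induction n with
  | zero =>
      intro q
      by_cases hq : q = T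
      · rw [hq, Vmin_T, Vmin_T]
      · show (if q = T then (1:ℝ) else 0) ≤ _
        rw [if_neg hq, Vmin_ns δ dist T σs hq]
        refine Finset.le_inf' _ _ fun b _ => ?_
        exact Finset.sum_nonneg fun q' _ => mul_nonneg (step_nonneg δ dist _ _ q q')
          (Vmin_mem δ dist T σs 0 q').1
  | succ n ih =>
      intro q
      by_cases hq : q = T
      · rw [hq, Vmin_T, Vmin_T]
      · rw [Vmin_ns δ dist T σs hq, Vmin_ns δ dist T σs hq]
        refine Finset.le_inf' _ _ fun b hb => ?_
        refine le_trans (Finset.inf'_le _ hb) ?_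
        exact Finset.sum_le_sum fun q' _ =>
          mul_le_mul_of_nonneg_left (ih q') (step_nonneg δ dist _ _ q q')

/-- Limit min-reach value. -/
def Vlim : Q → ℝ := fun q => ⨆ n, Vmin δ dist T σs n q

lemma bddAbove_Vmin (q : Q) : BddAbove (Set.range fun n => Vmin δ dist T σs n q) :=
  ⟨1, by rintro x ⟨n, rfl⟩; exact (Vmin_mem δ dist T σs n q).2⟩

lemma Vmin_le_Vlim (n : ℕ) (q : Q) : Vmin δ dist T σs n q ≤ Vlim δ dist T σs q :=
  le_ciSup (bddAbove_Vmin δ dist T σs q) n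

lemma Vlim_T : Vlim δ dist T σs T = 1 := by
  apply le_antisymm (ciSup_le fun n => le_of_eq (Vmin_T δ dist T σs n))
  calc (1:ℝ) = Vmin δ dist T σs 0 T := (Vmin_T δ dist T σs 0).symm
  _ ≤ Vlim δ dist T σs T := Vmin_le_Vlim δ dist T σs 0 T

lemma Vlim_mem (q : Q) : 0 ≤ Vlim δ dist T σs q ∧ Vlim δ dist T σs q ≤ 1 :=
  ⟨le_trans (Vmin_mem δ dist T σs 0 q).1 (Vmin_le_Vlim δ dist T σs 0 q),
   ciSup_le fun n => (Vmin_mem δ dist T σs n q).2⟩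

/-- The reach probability dominates the min-reach value, for every Player B strategy. -/
lemma Vmin_le_reachAux (sB : Strat Q B) :
    ∀ n h q, Vmin δ dist T σs n q ≤ reachSetNAux δ dist {T} n (ofPos σs) sB h q := by
  intro n
  induction n with
  | zero =>
      intro h q
      rw [reachAux_zero]
      by_cases hq : q = T
      · rw [if_pos (Set.mem_singleton_iff.mpr hq), hq, Vmin_T]
      · rw [if_neg (fun hmem => hq (Set.mem_singleton_iff.mp hmem))]
        show (if q = T then (1:ℝ) else 0) ≤ 0
        rw [if_neg hq]
  | succ n ih =>
      intro h q
      rw [reachAux_succ]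
      by_cases hq : q = T
      · rw [if_pos (Set.mem_singleton_iff.mpr hq), hq, Vmin_T]
      · rw [if_neg (fun hmem => hq (Set.mem_singleton_iff.mp hmem)),
          Vmin_ns δ dist T σs hq]
        have h1 : ∑ q', step δ dist (σs q) (sB h q) q q' * Vmin δ dist T σs n q'
            ≤ ∑ q', step δ dist (σs q) (sB h q) q q' *
              reachSetNAux δ dist {T} n (ofPos σs) sB (h ++ [q]) q' :=
          Finset.sum_le_sum fun q' _ =>
            mul_le_mul_of_nonneg_left (ih (h ++ [q]) q') (step_nonneg δ dist _ _ q q')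
        have h2 : Finset.univ.inf' Finset.univ_nonempty
            (fun b : B => ∑ q', step δ dist (σs q) (dirac b) q q' * Vmin δ dist T σs n q')
            ≤ ∑ q', step δ dist (σs q) (sB h q) q q' * Vmin δ dist T σs n q' := by
          rw [step_psi δ dist (σs q) (sB h q) q (Vmin δ dist T σs n),
            out_eq_sum_outB]
          refine le_convex (sB h q).2.1 (sB h q).2.2 fun b => ?_
          refine le_trans (Finset.inf'_le _ (Finset.mem_univ b)) ?_
          rw [step_dirac_psi]
        exact le_trans h2 h1

lemma Vlim_le_reach (sB : Strat Q B) (q : Q) :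
    Vlim δ dist T σs q ≤ reach δ dist T (ofPos σs) sB q :=
  ciSup_le fun n => le_trans (Vmin_le_reachAux δ dist T σs sB n [] q)
    (reachN_le_reach δ dist T n (ofPos σs) sB q)

/-- The limit value satisfies the one-step min inequality. -/
lemma Vlim_bellman {q : Q} (hq : q ≠ T) :
    ∃ b : B, ∑ q', step δ dist (σs q) (dirac b) q q' * Vlim δ dist T σs q'
      ≤ Vlim δ dist T σs q := by
  by_contra hno
  push_neg at hno
  obtain ⟨bh, -, hbh⟩ := Finset.exists_min_image Finset.univ
    (fun b : B => ∑ q', step δ dist (σs q) (dirac b) q q' * Vlim δ dist T σs q')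
    ⟨Classical.arbitrary B, Finset.mem_univ _⟩
  set ε := (∑ q', step δ dist (σs q) (dirac bh) q q' * Vlim δ dist T σs q')
    - Vlim δ dist T σs q with hε
  have hεpos : 0 < ε := by
    have := hno bh
    rw [hε]; linarith
  have hεall : ∀ b : B, Vlim δ dist T σs q + ε
      ≤ ∑ q', step δ dist (σs q) (dirac b) q q' * Vlim δ dist T σs q' := by
    intro b
    have := hbh b (Finset.mem_univ b)
    rw [hε]; linarith
  obtain ⟨N, hN⟩ := uniform_approx (fun n q' => Vmin δ dist T σs n q')
    (fun q' => monotone_nat_of_le_succ (fun n => Vmin_mono δ dist T σs n q'))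
    (fun q' n => (Vmin_mem δ dist T σs n q').2) (half_pos hεpos)
  have hkey : ∀ b : B, Vlim δ dist T σs q + ε / 2
      ≤ ∑ q', step δ dist (σs q) (dirac b) q q' * Vmin δ dist T σs N q' := by
    intro b
    have h1 : ∑ q', step δ dist (σs q) (dirac b) q q'
        * (Vlim δ dist T σs q' - ε / 2)
        ≤ ∑ q', step δ dist (σs q) (dirac b) q q' * Vmin δ dist T σs N q' := by
      refine Finset.sum_le_sum fun q' _ => ?_
      refine mul_le_mul_of_nonneg_left ?_ (step_nonneg δ dist _ _ q q')
      exact hN q'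
    rw [sum_step_sub] at h1
    have h2 := hεall b
    linarith
  have hcontr : Vlim δ dist T σs q + ε / 2 ≤ Vmin δ dist T σs (N+1) q := by
    rw [Vmin_ns δ dist T σs hq]
    exact Finset.le_inf' _ _ fun b _ => hkey b
  have := Vmin_le_Vlim δ dist T σs (N+1) q
  linarith

end OptStrat

end Stmt10Aux
namespace Stmt10Aux

open CRG Finset

section OptMain
variable {A B Q D : Type} [Fintype A] [Fintype B] [Fintype Q] [Fintype D]
  [Nonempty A] [Nonempty B]
variable (δ : Q → A → B → D) (dist : D → FDist Q) (T : Q)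

lemma exists_opt_positional
    (hRM : ∀ (q : Q) (E : Set D) (α : D → ℝ),
      (∀ d ∉ E, α d ∈ Set.Icc (0:ℝ) 1) → RMwrt (δ q) E α) :
    ∀ q : Q, Maximizable δ dist T q := by
  classical
  have hsec := mpos_subset_G δ dist T hRM
  set m := mval δ dist T with hm
  have hchoice : ∀ q : Q, ∃ p : FDist A × ℕ,
      ((∃ n, q ∈ SecN δ dist m T ∅ n) ∧ q ≠ T) →
        ((∀ j ≤ p.2, q ∉ SecN δ dist m T ∅ j) ∧
          p.1 ∈ Eff δ dist m q (SecN δ dist m T ∅ p.2) ∅) := by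
    intro q
    by_cases hq : (∃ n, q ∈ SecN δ dist m T ∅ n) ∧ q ≠ T
    · obtain ⟨hex, hqT⟩ := hq
      have hn₀ := Nat.find_spec hex
      have hn₀pos : Nat.find hex ≠ 0 := by
        intro h0
        rw [h0] at hn₀
        exact hqT hn₀
      obtain ⟨k, hk⟩ : ∃ k, Nat.find hex = k + 1 := ⟨Nat.find hex - 1, by omega⟩
      rw [hk] at hn₀
      rcases hn₀ with hq1 | hq1
      · exact absurd hq1 (Nat.find_min hex (by omega))
      · exact ⟨(hq1.2.some, k),
          fun _ => ⟨fun j hj => Nat.find_min hex (by omega), hq1.2.some_mem⟩⟩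
    · exact ⟨(Classical.arbitrary _, 0), fun h => absurd h hq⟩
  choose sel hsel using hchoice
  set σs : Q → FDist A := fun q => (sel q).1 with hσs
  set ks : Q → ℕ := fun q => (sel q).2 with hks
  have hkey : ∀ q, m q ≤ Vlim δ dist T σs q := by
    by_contra hno
    push_neg at hno
    obtain ⟨qx, hqx⟩ := hno
    set XF := Finset.univ.filter (fun q => Vlim δ dist T σs q < m q) with hXF
    have hXFne : XF.Nonempty := ⟨qx, Finset.mem_filter.mpr ⟨Finset.mem_univ _, hqx⟩⟩
    obtain ⟨qm, hqmX, hqmmax⟩ :=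
      Finset.exists_max_image XF (fun q => m q - Vlim δ dist T σs q) hXFne
    set ζ := m qm - Vlim δ dist T σs qm with hζ
    have hζpos : 0 < ζ := by
      have := (Finset.mem_filter.mp hqmX).2
      rw [hζ]; linarith
    have hbound : ∀ q, m q - Vlim δ dist T σs q ≤ ζ := by
      intro q
      by_cases hqX : q ∈ XF
      · exact hqmmax q hqX
      · have hq2 : ¬ (Vlim δ dist T σs q < m q) :=
          fun hc => hqX (Finset.mem_filter.mpr ⟨Finset.mem_univ _, hc⟩)
        push_neg at hq2
        rw [hζ]
        have := (Finset.mem_filter.mp hqmX).2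
        linarith
    set YF := Finset.univ.filter (fun q => m q - Vlim δ dist T σs q = ζ) with hYF
    have hYne : YF.Nonempty := ⟨qm, Finset.mem_filter.mpr ⟨Finset.mem_univ _, rfl⟩⟩
    obtain ⟨qY, hqYmem, hqYmin⟩ := Finset.exists_min_image YF ks hYne
    have hqYeq : m qY - Vlim δ dist T σs qY = ζ := (Finset.mem_filter.mp hqYmem).2
    have hqYpos : 0 < m qY := by
      have := (Vlim_mem δ dist T σs qY).1
      linarith
    have hqYT : qY ≠ T := by
      intro h
      rw [h, Vlim_T] at hqYeq
      have := (mval_mem δ dist T T).2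
      linarith
    have hqYG : ∃ n, qY ∈ SecN δ dist m T ∅ n :=
      Set.mem_iUnion.mp (hsec qY hqYpos)
    obtain ⟨hnot, hEff⟩ := hsel qY ⟨hqYG, hqYT⟩
    have hOptA : σs qY ∈ OptA (locPay δ dist m qY) := hEff.1.1
    have hvalfix : valGF (locPay δ dist m qY) = m qY := by
      rw [← Δop_eq_valGF δ dist T hqYT]
      exact mval_fixed δ dist T qY
    have hvstrat : valStratGF (locPay δ dist m qY) (σs qY) = m qY := by
      have h2 : valStratGF (locPay δ dist m qY) (σs qY) = valGF (locPay δ dist m qY) := hOptA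
      rw [h2, hvalfix]
    obtain ⟨b, hb⟩ := Vlim_bellman δ dist T σs (q := qY) hqYT
    have hsubm : m qY ≤ ∑ q', step δ dist (σs qY) (dirac b) qY q' * m q' := by
      rw [step_dirac_psi]
      calc m qY = valStratGF (locPay δ dist m qY) (σs qY) := hvstrat.symm
      _ ≤ outB (locPay δ dist m qY) (σs qY) b := valStratGF_le_outB _ _ b
    have hsplit : ∑ q', step δ dist (σs qY) (dirac b) qY q'
          * (m q' - Vlim δ dist T σs q')
        = (∑ q', step δ dist (σs qY) (dirac b) qY q' * m q')
          - ∑ q', step δ dist (σs qY) (dirac b) qY q' * Vlim δ dist T σs q' := by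
      rw [← Finset.sum_sub_distrib]
      exact Finset.sum_congr rfl fun q' _ => by ring
    have hgeζ : ζ ≤ ∑ q', step δ dist (σs qY) (dirac b) qY q'
        * (m q' - Vlim δ dist T σs q') := by
      rw [hsplit]
      linarith [hsubm, hb, hqYeq]
    have htight := convex_eq'
      (w := fun q' => step δ dist (σs qY) (dirac b) qY q')
      (f := fun q' => m q' - Vlim δ dist T σs q')
      (fun q' => step_nonneg δ dist _ _ qY q') (step_sum δ dist _ _ qY)
      (fun q' _ => hbound q') hgeζ
    have hle2 : ∑ q', step δ dist (σs qY) (dirac b) qY q'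
        * (m q' - Vlim δ dist T σs q') ≤ ζ :=
      convex_le' (fun q' => step_nonneg δ dist _ _ qY q') (step_sum δ dist _ _ qY)
        (fun q' _ => hbound q')
    rw [hsplit] at hle2
    have hmeq : ∑ q', step δ dist (σs qY) (dirac b) qY q' * m q' = m qY :=
      le_antisymm (by linarith [hb, hqYeq]) hsubm
    have houtBm : outB (locPay δ dist m qY) (σs qY) b = m qY := by
      show outB (fun a b' => lift dist m (δ qY a b')) (σs qY) b = m qY
      rw [← step_dirac_psi]
      exact hmeq
    have hbopt : b ∈ optActs (locPay δ dist m qY) (σs qY) := by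
      show outB (locPay δ dist m qY) (σs qY) b = valStratGF (locPay δ dist m qY) (σs qY)
      rw [houtBm, hvstrat]
    obtain ⟨a, ha, hnat⟩ := hEff.1.2 b hbopt
    obtain ⟨q'', hq''Sec, hq''dist⟩ := hnat
    have hstep_pos : step δ dist (σs qY) (dirac b) qY q'' ≠ 0 := by
      rw [step_dirac_apply]
      have h1 : 0 < (σs qY).1 a := lt_of_le_of_ne ((σs qY).2.1 a) (Ne.symm ha)
      have h2 : 0 < (dist (δ qY a b)).1 q'' :=
        lt_of_le_of_ne ((dist _).2.1 q'') (Ne.symm hq''dist)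
      have hterm : 0 < (σs qY).1 a * (dist (δ qY a b)).1 q'' := mul_pos h1 h2
      have hsum : (σs qY).1 a * (dist (δ qY a b)).1 q''
          ≤ ∑ a', (σs qY).1 a' * (dist (δ qY a' b)).1 q'' :=
        Finset.single_le_sum
          (f := fun a' => (σs qY).1 a' * (dist (δ qY a' b)).1 q'')
          (fun a' _ => mul_nonneg ((σs qY).2.1 a') ((dist (δ qY a' b)).2.1 q''))
          (Finset.mem_univ a)
      intro hz
      rw [hz] at hsum
      linarith
    have hq''Y := htight q'' hstep_pos
    have hq''pos : 0 < m q'' := by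
      have := (Vlim_mem δ dist T σs q'').1
      have h2 : m q'' - Vlim δ dist T σs q'' = ζ := hq''Y
      linarith
    have hq''T : q'' ≠ T := by
      intro h
      have h2 : m q'' - Vlim δ dist T σs q'' = ζ := hq''Y
      rw [h, Vlim_T] at h2
      have := (mval_mem δ dist T T).2
      linarith
    obtain ⟨hnot'', -⟩ := hsel q'' ⟨Set.mem_iUnion.mp (hsec q'' hq''pos), hq''T⟩
    have hlt : ks q'' < ks qY := by
      by_contra hge
      push_neg at hge
      exact hnot'' (ks qY) hge hq''Sec
    have hmem'' : q'' ∈ YF := Finset.mem_filter.mpr ⟨Finset.mem_univ _, hq''Y⟩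
    have hminY := hqYmin q'' hmem''
    omega
  intro q
  have h1 : m q ≤ valA δ dist T (ofPos σs) q :=
    le_valA δ dist T fun sB => le_trans (hkey q) (Vlim_le_reach δ dist T σs sB q)
  refine ⟨ofPos σs, le_antisymm (valA_le_value δ dist T _ q) ?_⟩
  calc value δ dist T q = m q := value_eq_mval δ dist T q
  _ ≤ valA δ dist T (ofPos σs) q := h1

end OptMain

end Stmt10Aux
namespace Stmt10Aux

open CRG Finset

section Pullback
variable {A B : Type} [Fintype A] [Fintype B] [Nonempty A] [Nonempty B]

lemma RMwrt_pullback {O D : Type} (ρ : A → B → O) (g : O → D) (E : Set D) (α : D → ℝ)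
    (hRM : RMwrt ρ (g ⁻¹' E) (α ∘ g)) : RMwrt (fun a b => g (ρ a b)) E α := by
  intro v hv
  have hpv : ∀ y : ℝ, (fun a b => extendVal E α y (g (ρ a b)))
      = (fun a b => extendVal (g ⁻¹' E) (α ∘ g) y (ρ a b)) := by
    intro y
    funext a b
    unfold extendVal
    by_cases h : g (ρ a b) ∈ E
    · rw [if_pos h, if_pos (show ρ a b ∈ g ⁻¹' E from h)]
    · rw [if_neg h, if_neg (show ρ a b ∉ g ⁻¹' E from h)]
      rfl
  have hfval : fval (fun a b => g (ρ a b)) E α = fval ρ (g ⁻¹' E) (α ∘ g) := by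
    funext y
    show valGF _ = valGF _
    rw [hpv y]
  have hv' : IsLfpVal ρ (g ⁻¹' E) (α ∘ g) v := by
    obtain ⟨h1, h2, h3⟩ := hv
    refine ⟨h1, ?_, ?_⟩
    · rw [← hfval]
      exact h2
    · intro y hy hfy
      refine h3 y hy ?_
      rw [hfval]
      exact hfy
  rcases hRM v hv' with h0 | ⟨σA, hOpt, hesc⟩
  · exact Or.inl h0
  right
  rw [hpv v]
  refine ⟨σA, hOpt, fun b hb => ?_⟩
  obtain ⟨a, ha, h⟩ := hesc b hb
  exact ⟨a, ha, h⟩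

end Pullback

end Stmt10Aux
/-- all states of all finite concurrent reachability games with local
interactions in `𝒢` are maximizable iff every game form of `𝒢` is reach-maximizable. -/
theorem stmt10
    {A B : Type} [Fintype A] [Fintype B] [Nonempty A] [Nonempty B]
    (𝒢 : Set (CRG.GameForm A B)) :
    (∀ (Q D : Type) [Fintype Q] [Fintype D] [Nonempty Q] [Nonempty D] [DecidableEq Q]
        (δ : Q → A → B → D) (dist : D → FDist Q) (T : Q),
        CRG.Absorbing δ dist T → CRG.UsesForms 𝒢 δ →
          ∀ q : Q, CRG.Maximizable δ dist T q) ↔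
      ∀ F ∈ 𝒢, CRG.RMform F.ρ := by
  constructor
  · intro hL F hF E α hα
    letI : Fintype F.O := F.fin
    letI : Nonempty (Fin 3 ⊕ {o : F.O // o ∉ E}) := ⟨Sum.inl 0⟩
    refine Stmt10Aux.forward_RMwrt F.ρ E α hα ?_
    refine hL (Fin 3) (Fin 3 ⊕ {o : F.O // o ∉ E})
      (CRG.triδ F.ρ E) (CRG.triDist E α hα) 1 ?_ ?_ 0
    · -- Absorbing
      intro a b
      rw [Stmt10Aux.triδ_ns F.ρ E 1 (by decide) a b]
      funext q
      by_cases hq : q = 1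
      · simp [CRG.dirac, CRG.triDist, hq]
      · simp [CRG.dirac, CRG.triDist, hq]
    · -- UsesForms
      intro q
      have htri : ∀ x : Fin 3, x = 0 ∨ x = 1 ∨ x = 2 := by decide
      rcases htri q with rfl | rfl | rfl
      · refine ⟨F, hF, fun o => if h : o ∈ E then Sum.inl 0 else Sum.inr ⟨o, h⟩, ?_⟩
        funext a b
        rw [Stmt10Aux.triδ_zero]
      · refine ⟨F, hF, fun _ => Sum.inl 1, ?_⟩
        funext a b
        exact Stmt10Aux.triδ_ns F.ρ E 1 (by decide) a b
      · refine ⟨F, hF, fun _ => Sum.inl 2, ?_⟩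
        funext a b
        exact Stmt10Aux.triδ_ns F.ρ E 2 (by decide) a b
  · intro hR Q D _ _ _ _ _ δ dist T hAbs hUses q
    refine Stmt10Aux.exists_opt_positional δ dist T ?_ q
    intro q' E α hα
    obtain ⟨F, hF, g, hg⟩ := hUses q'
    have h1 := hR F hF (g ⁻¹' E) (α ∘ g) (fun o ho => hα (g o) ho)
    have h2 := Stmt10Aux.RMwrt_pullback F.ρ g E α h1
    rw [hg]
    exact h2
end
end

section
/- A finite game form F = ⟨St_A, St_B, O, ρ⟩ is determined if and only if for every partial valuation α : O∖E → [0,1] of its outcomes, the least fixed point v_α of f_α equals f_α(0). -/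
open scoped BigOperators Classical

noncomputable section

namespace CRG

section Helpers
set_option linter.unusedSectionVars false

variable {A B : Type} [Fintype A] [Fintype B]

/-- The uniform distribution. -/
noncomputable def unif (X : Type) [Fintype X] [Nonempty X] : FDist X :=
  ⟨fun _ => (Fintype.card X : ℝ)⁻¹, by
    have hc : (0:ℝ) < (Fintype.card X : ℝ) := by exact_mod_cast Fintype.card_pos
    constructor
    · intro x; positivity
    · simp [Finset.sum_const, Finset.card_univ]⟩

instance instNonemptyFDist (X : Type) [Fintype X] [Nonempty X] : Nonempty (FDist X) :=
  ⟨unif X⟩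

lemma comb_le {X : Type} [Fintype X] (σ : FDist X) (g : X → ℝ) (c : ℝ)
    (h : ∀ x, g x ≤ c) : ∑ x, σ.1 x * g x ≤ c := by
  calc ∑ x, σ.1 x * g x ≤ ∑ x, σ.1 x * c :=
        Finset.sum_le_sum (fun x _ => mul_le_mul_of_nonneg_left (h x) (σ.2.1 x))
    _ = c := by rw [← Finset.sum_mul, σ.2.2, one_mul]

lemma le_comb {X : Type} [Fintype X] (σ : FDist X) (g : X → ℝ) (c : ℝ)
    (h : ∀ x, c ≤ g x) : c ≤ ∑ x, σ.1 x * g x := by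
  calc c = ∑ x, σ.1 x * c := by rw [← Finset.sum_mul, σ.2.2, one_mul]
    _ ≤ ∑ x, σ.1 x * g x :=
        Finset.sum_le_sum (fun x _ => mul_le_mul_of_nonneg_left (h x) (σ.2.1 x))

lemma out_eq (u : A → B → ℝ) (σA : FDist A) (σB : FDist B) :
    out u σA σB = ∑ b, σB.1 b * outB u σA b := by
  unfold out outB
  rw [Finset.sum_comm]
  refine Finset.sum_congr rfl fun b _ => ?_
  rw [Finset.mul_sum]
  refine Finset.sum_congr rfl fun a _ => ?_
  ring

lemma out_eq' (u : A → B → ℝ) (σA : FDist A) (σB : FDist B) :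
    out u σA σB = ∑ a, σA.1 a * (∑ b, σB.1 b * u a b) := by
  unfold out
  refine Finset.sum_congr rfl fun a _ => ?_
  rw [Finset.mul_sum]
  refine Finset.sum_congr rfl fun b _ => ?_
  ring

lemma out_nonneg {u : A → B → ℝ} (h0 : ∀ a b, 0 ≤ u a b) (σA : FDist A) (σB : FDist B) :
    0 ≤ out u σA σB := by
  rw [out_eq]
  refine le_comb σB _ 0 fun b => ?_
  exact le_comb σA _ 0 fun a => h0 a b

lemma out_le_one {u : A → B → ℝ} (h1 : ∀ a b, u a b ≤ 1) (σA : FDist A) (σB : FDist B) :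
    out u σA σB ≤ 1 := by
  rw [out_eq]
  refine comb_le σB _ 1 fun b => ?_
  exact comb_le σA _ 1 fun a => h1 a b

variable [Nonempty A] [Nonempty B]

lemma valStrat_le_out {u : A → B → ℝ} (h0 : ∀ a b, 0 ≤ u a b) (σA : FDist A) (σB : FDist B) :
    valStratGF u σA ≤ out u σA σB := by
  refine ciInf_le ⟨0, ?_⟩ σB
  rintro x ⟨σB', rfl⟩
  exact out_nonneg h0 σA σB'

lemma le_valStrat {u : A → B → ℝ} (σA : FDist A) {c : ℝ}
    (h : ∀ σB : FDist B, c ≤ out u σA σB) : c ≤ valStratGF u σA :=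
  le_ciInf h

lemma valGF_le' {u : A → B → ℝ} {c : ℝ} (h : ∀ σA : FDist A, valStratGF u σA ≤ c) :
    valGF u ≤ c :=
  ciSup_le h

lemma valStrat_le_valGF {u : A → B → ℝ} (h0 : ∀ a b, 0 ≤ u a b) (h1 : ∀ a b, u a b ≤ 1)
    (σA : FDist A) : valStratGF u σA ≤ valGF u := by
  refine le_ciSup ⟨1, ?_⟩ σA
  rintro x ⟨σA', rfl⟩
  exact (valStrat_le_out h0 σA' (unif B)).trans (out_le_one h1 σA' (unif B))

lemma outB_dirac [DecidableEq A] (u : A → B → ℝ) (a : A) (b : B) :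
    outB u (dirac a) b = u a b := by
  unfold outB dirac
  simp

lemma out_dirac_right [DecidableEq B] (u : A → B → ℝ) (σA : FDist A) (b : B) :
    out u σA (dirac b) = outB u σA b := by
  rw [out_eq]
  unfold dirac
  simp

lemma pure_le_valGF [DecidableEq A] {u : A → B → ℝ} (h0 : ∀ a b, 0 ≤ u a b)
    (h1 : ∀ a b, u a b ≤ 1) (a : A) {c : ℝ} (hc : ∀ b, c ≤ u a b) : c ≤ valGF u := by
  have h2 : c ≤ valStratGF u (dirac a) := by
    refine le_valStrat _ fun σB => ?_
    rw [out_eq]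
    refine le_comb σB _ c fun b => ?_
    rw [outB_dirac]
    exact hc b
  exact h2.trans (valStrat_le_valGF h0 h1 _)

lemma valGF_le_pure [DecidableEq B] {u : A → B → ℝ} (h0 : ∀ a b, 0 ≤ u a b)
    (b : B) {c : ℝ} (hc : ∀ a, u a b ≤ c) : valGF u ≤ c := by
  refine valGF_le' fun σA => ?_
  refine (valStrat_le_out h0 σA (dirac b)).trans ?_
  rw [out_dirac_right]
  exact comb_le σA _ c hc

lemma valGF_const_one {u : A → B → ℝ} (h : ∀ a b, u a b = 1) : valGF u = 1 := by
  classical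
  refine le_antisymm (valGF_le_pure (fun a b => by rw [h]; norm_num) (Classical.arbitrary B)
    (fun a => (h _ _).le)) ?_
  exact pure_le_valGF (fun a b => by rw [h]; norm_num) (fun a b => (h a b).le)
    (Classical.arbitrary A) (fun b => (h _ _).ge)

/-- Lower bound on the value via the uniform strategy, when every column has a `1`. -/
lemma valGF_ge_unif {u : A → B → ℝ} (h0 : ∀ a b, 0 ≤ u a b) (h1 : ∀ a b, u a b ≤ 1)
    {y : ℝ} (hy : ∀ a b, y ≤ u a b) (hcol : ∀ b, ∃ a, u a b = 1) :
    y + (1 - y) / Fintype.card A ≤ valGF u := by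
  have hcard : (0:ℝ) < Fintype.card A := by exact_mod_cast Fintype.card_pos
  have h2 : y + (1 - y) / Fintype.card A ≤ valStratGF u (unif A) := by
    refine le_valStrat _ fun σB => ?_
    rw [out_eq]
    refine le_comb σB _ _ fun b => ?_
    obtain ⟨a₀, ha₀⟩ := hcol b
    have hsum : (Fintype.card A - 1 : ℝ) * y + 1 ≤ ∑ a, u a b := by
      rw [← Finset.sum_erase_add _ _ (Finset.mem_univ a₀), ha₀]
      have : (Finset.univ.erase a₀).card • y ≤ ∑ a ∈ Finset.univ.erase a₀, u a b :=
        Finset.card_nsmul_le_sum _ _ _ (fun x _ => hy x b)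
      rw [Finset.card_erase_of_mem (Finset.mem_univ a₀), Finset.card_univ] at this
      have hc1 : (1:ℕ) ≤ Fintype.card A := Fintype.card_pos
      have : ((Fintype.card A - 1 : ℕ) : ℝ) * y ≤ ∑ a ∈ Finset.univ.erase a₀, u a b := by
        rw [← nsmul_eq_mul]; exact this
      rw [Nat.cast_sub hc1] at this
      push_cast at this ⊢
      linarith
    have houtB : y + (1 - y) / Fintype.card A ≤ outB u (unif A) b := by
      unfold outB unif
      rw [← Finset.mul_sum]
      rw [div_eq_mul_inv, ← ge_iff_le]
      have := mul_le_mul_of_nonneg_left hsum (le_of_lt (inv_pos.mpr hcard))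
      calc ((Fintype.card A : ℝ))⁻¹ * ∑ a, u a b
          ≥ (Fintype.card A : ℝ)⁻¹ * ((Fintype.card A - 1 : ℝ) * y + 1) := this
        _ = y + (1 - y) * (Fintype.card A : ℝ)⁻¹ := by field_simp; ring
    exact houtB
  exact h2.trans (valStrat_le_valGF h0 h1 _)

/-- Upper bound on the value via the uniform counter-strategy, when every row has a `0`. -/
lemma valGF_le_unif {u : A → B → ℝ} (h0 : ∀ a b, 0 ≤ u a b) (h1 : ∀ a b, u a b ≤ 1)
    (hrow : ∀ a, ∃ b, u a b = 0) :
    valGF u ≤ 1 - 1 / Fintype.card B := by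
  have hcard : (0:ℝ) < Fintype.card B := by exact_mod_cast Fintype.card_pos
  refine valGF_le' fun σA => ?_
  refine (valStrat_le_out h0 σA (unif B)).trans ?_
  rw [out_eq']
  refine comb_le σA _ _ fun a => ?_
  obtain ⟨b₀, hb₀⟩ := hrow a
  have hsum : ∑ b, u a b ≤ (Fintype.card B - 1 : ℝ) := by
    rw [← Finset.sum_erase_add _ _ (Finset.mem_univ b₀), hb₀, add_zero]
    have : ∑ b ∈ Finset.univ.erase b₀, u a b ≤ (Finset.univ.erase b₀).card • (1:ℝ) :=
      Finset.sum_le_card_nsmul _ _ _ (fun x _ => h1 a x)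
    rw [Finset.card_erase_of_mem (Finset.mem_univ b₀), Finset.card_univ] at this
    have hc1 : (1:ℕ) ≤ Fintype.card B := Fintype.card_pos
    rw [nsmul_eq_mul, mul_one, Nat.cast_sub hc1] at this
    push_cast at this ⊢
    linarith
  show ∑ b, (unif B).1 b * u a b ≤ _
  unfold unif
  rw [← Finset.mul_sum]
  calc ((Fintype.card B : ℝ))⁻¹ * ∑ b, u a b
      ≤ (Fintype.card B : ℝ)⁻¹ * ((Fintype.card B : ℝ) - 1) :=
        mul_le_mul_of_nonneg_left hsum (le_of_lt (inv_pos.mpr hcard))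
    _ = 1 - 1 / Fintype.card B := by field_simp

/-- For determined game forms, the (mixed) value is the pure max-min. -/
lemma valGF_eq_pmm {O : Type} {ρ : A → B → O} (hdet : Determined ρ) (w : O → ℝ)
    (h0 : ∀ o, 0 ≤ w o) (h1 : ∀ o, w o ≤ 1) :
    valGF (fun a b => w (ρ a b)) =
      Finset.univ.sup' Finset.univ_nonempty
        (fun a => Finset.univ.inf' Finset.univ_nonempty (fun b => w (ρ a b))) := by
  classical
  set u : A → B → ℝ := fun a b => w (ρ a b) with hu
  have h0' : ∀ a b, 0 ≤ u a b := fun a b => h0 _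
  have h1' : ∀ a b, u a b ≤ 1 := fun a b => h1 _
  set pmm : ℝ := Finset.univ.sup' Finset.univ_nonempty
      (fun a => Finset.univ.inf' Finset.univ_nonempty (fun b => u a b)) with hpmm
  set pMm : ℝ := Finset.univ.inf' Finset.univ_nonempty
      (fun b => Finset.univ.sup' Finset.univ_nonempty (fun a => u a b)) with hpMm
  have step1 : pmm ≤ valGF u := by
    obtain ⟨a, -, ha⟩ := Finset.exists_mem_eq_sup' Finset.univ_nonempty
      (fun a => Finset.univ.inf' Finset.univ_nonempty (fun b => u a b))
    rw [hpmm, ha]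
    exact pure_le_valGF h0' h1' a (fun b => Finset.inf'_le _ (Finset.mem_univ b))
  have step2 : valGF u ≤ pMm := by
    obtain ⟨b, -, hb⟩ := Finset.exists_mem_eq_inf' Finset.univ_nonempty
      (fun b => Finset.univ.sup' Finset.univ_nonempty (fun a => u a b))
    rw [hpMm, hb]
    exact valGF_le_pure h0' b (fun a => Finset.le_sup' (fun a => u a b) (Finset.mem_univ a))
  have step3 : pMm ≤ pmm := by
    rcases hdet {o | pMm ≤ w o} with ⟨a, ha⟩ | ⟨b, hb⟩
    · calc pMm ≤ Finset.univ.inf' Finset.univ_nonempty (fun b => u a b) :=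
            Finset.le_inf' _ _ (fun b _ => ha b)
        _ ≤ pmm := Finset.le_sup' (fun a => Finset.univ.inf' Finset.univ_nonempty (fun b => u a b)) (Finset.mem_univ a)
    · exfalso
      have h2 : Finset.univ.sup' Finset.univ_nonempty (fun a => u a b) < pMm :=
        (Finset.sup'_lt_iff _).mpr (fun a _ => lt_of_not_ge (hb a))
      exact absurd (Finset.inf'_le _ (Finset.mem_univ b)) (not_le.mpr h2)
  exact le_antisymm (step2.trans step3) step1

end Helpers

end CRG


/-- a finite game form is determined iff for every partial valuation `α`
of its outcomes, the least fixed point of `f_α` equals `f_α(0)`. -/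
theorem stmt11
    {A B O : Type} [Fintype A] [Fintype B] [Fintype O]
    [Nonempty A] [Nonempty B] [Nonempty O]
    (ρ : A → B → O) :
    CRG.Determined ρ ↔
      ∀ (E : Set O) (α : O → ℝ), (∀ o ∉ E, α o ∈ Set.Icc (0:ℝ) 1) →
        ∀ v : ℝ, CRG.IsLfpVal ρ E α v → v = CRG.fval ρ E α 0 := by
  classical
  constructor
  · -- Determined → least fixed point equals f_α(0)
    intro hdet E α hα v hv
    have hw : ∀ y ∈ Set.Icc (0:ℝ) 1, ∀ o, CRG.extendVal E α y o ∈ Set.Icc (0:ℝ) 1 := by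
      intro y hy o
      unfold CRG.extendVal
      split
      · exact hy
      · exact hα o (by assumption)
    set g : ℝ → ℝ := fun y => Finset.univ.sup' Finset.univ_nonempty
        (fun a => Finset.univ.inf' Finset.univ_nonempty
          (fun b => CRG.extendVal E α y (ρ a b))) with hg
    have key : ∀ y ∈ Set.Icc (0:ℝ) 1, CRG.fval ρ E α y = g y := by
      intro y hy
      exact CRG.valGF_eq_pmm hdet _ (fun o => (hw y hy o).1) (fun o => (hw y hy o).2)
    have hwmono : ∀ {y z : ℝ}, y ≤ z → ∀ o, CRG.extendVal E α y o ≤ CRG.extendVal E α z o := by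
      intro y z hyz o
      unfold CRG.extendVal
      split
      · exact hyz
      · exact le_rfl
    have gmono : ∀ {y z : ℝ}, y ≤ z → g y ≤ g z := by
      intro y z hyz
      refine Finset.sup'_le _ _ fun a _ => ?_
      refine le_trans ?_ (Finset.le_sup' (fun a => Finset.univ.inf' Finset.univ_nonempty
        (fun b => CRG.extendVal E α z (ρ a b))) (Finset.mem_univ a))
      refine Finset.le_inf' _ _ fun b _ => ?_
      exact (Finset.inf'_le (fun b => CRG.extendVal E α y (ρ a b))
        (Finset.mem_univ b)).trans (hwmono hyz _)
    have g0mem : g 0 ∈ Set.Icc (0:ℝ) 1 := by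
      constructor
      · refine le_trans ?_ (Finset.le_sup' (fun a => Finset.univ.inf' Finset.univ_nonempty
          (fun b => CRG.extendVal E α 0 (ρ a b))) (Finset.mem_univ (Classical.arbitrary A)))
        exact Finset.le_inf' _ _ fun b _ => (hw 0 ⟨le_rfl, zero_le_one⟩ _).1
      · refine Finset.sup'_le _ _ fun a _ => ?_
        exact (Finset.inf'_le (fun b => CRG.extendVal E α 0 (ρ a b))
          (Finset.mem_univ (Classical.arbitrary B))).trans (hw 0 ⟨le_rfl, zero_le_one⟩ _).2
    have hfix : g (g 0) ≤ g 0 := by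
      refine Finset.sup'_le _ _ fun a _ => ?_
      obtain ⟨b, -, hb⟩ := Finset.exists_mem_eq_inf' Finset.univ_nonempty
        (fun b => CRG.extendVal E α 0 (ρ a b))
      refine (Finset.inf'_le (fun b => CRG.extendVal E α (g 0) (ρ a b))
        (Finset.mem_univ b)).trans ?_
      by_cases hmem : ρ a b ∈ E
      · unfold CRG.extendVal
        rw [if_pos hmem]
      · have h1 : CRG.extendVal E α (g 0) (ρ a b) = CRG.extendVal E α 0 (ρ a b) := by
          unfold CRG.extendVal
          rw [if_neg hmem, if_neg hmem]
        rw [h1, ← hb]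
        exact Finset.le_sup' (fun a => Finset.univ.inf' Finset.univ_nonempty
          (fun b => CRG.extendVal E α 0 (ρ a b))) (Finset.mem_univ a)
    have hgfix : g (g 0) = g 0 := le_antisymm hfix (gmono g0mem.1)
    obtain ⟨hv01, hvfix, hvleast⟩ := hv
    have hm : CRG.fval ρ E α (g 0) = g 0 := by rw [key (g 0) g0mem, hgfix]
    have hvle : v ≤ g 0 := hvleast (g 0) g0mem hm
    have hlev : g 0 ≤ v := by
      have h2 := gmono hv01.1
      rw [← key v hv01, hvfix] at h2
      exact h2
    rw [le_antisymm hvle hlev, key 0 ⟨le_rfl, zero_le_one⟩]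
  · -- converse, by contraposition
    intro h E
    by_contra hE
    push_neg at hE
    obtain ⟨h1, h2⟩ := hE
    set α1 : O → ℝ := fun _ => 1 with hα1
    have hα : ∀ o ∉ Eᶜ, α1 o ∈ Set.Icc (0:ℝ) 1 := fun o _ => ⟨zero_le_one, le_rfl⟩
    have hcardA : (0:ℝ) < Fintype.card A := by exact_mod_cast Fintype.card_pos
    have hcardB : (0:ℝ) < Fintype.card B := by exact_mod_cast Fintype.card_pos
    have hlfp : CRG.IsLfpVal ρ Eᶜ α1 1 := by
      refine ⟨⟨zero_le_one, le_rfl⟩, ?_, ?_⟩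
      · exact CRG.valGF_const_one (fun a b => by simp only [CRG.extendVal]; split <;> rfl)
      · intro y hy hyfix
        by_contra hlt
        push_neg at hlt
        have hb := CRG.valGF_ge_unif (u := fun a b => CRG.extendVal Eᶜ α1 y (ρ a b))
          (fun a b => by simp only [CRG.extendVal]; split; exacts [hy.1, zero_le_one])
          (fun a b => by simp only [CRG.extendVal]; split; exacts [hy.2, le_rfl])
          (y := y) (fun a b => by simp only [CRG.extendVal]; split; exacts [le_rfl, hy.2])
          (fun b => by
            obtain ⟨a, ha⟩ := h2 b
            exact ⟨a, by simp only [CRG.extendVal]; rw [if_neg (by simpa using ha)]⟩)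
        have hb' : y + (1 - y) / Fintype.card A ≤ y := by
          calc y + (1 - y) / Fintype.card A ≤ CRG.fval ρ Eᶜ α1 y := hb
            _ = y := hyfix
        have hpos : 0 < (1 - y) / Fintype.card A := by
          apply div_pos <;> linarith
        linarith
    have hres := h Eᶜ α1 hα 1 hlfp
    have hub : CRG.fval ρ Eᶜ α1 0 ≤ 1 - 1 / Fintype.card B := by
      refine CRG.valGF_le_unif (u := fun a b => CRG.extendVal Eᶜ α1 0 (ρ a b))
        (fun a b => by simp only [CRG.extendVal]; split; exacts [le_rfl, zero_le_one])
        (fun a b => by simp only [CRG.extendVal]; split; exacts [zero_le_one, le_rfl])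
        (fun a => ?_)
      obtain ⟨b, hb⟩ := h1 a
      exact ⟨b, by simp only [CRG.extendVal]; rw [if_pos (by simpa using hb)]⟩
    have hposB : 0 < 1 / (Fintype.card B : ℝ) := by positivity
    linarith
end
end

section
/- Every determined finite game form is reach-maximizable: if F = ⟨St_A, St_B, O, ρ⟩ is determined, then for every partial valuation α : O∖E → [0,1], either v_α = 0 or there exists a pure strategy a ∈ St_A optimal in ⟨F, α̂⟩ such that ρ(a, St_B) ⊆ O∖E; in particular F is RM w.r.t. every partial valuation. -/
open scoped BigOperators Classical

noncomputable section

section Stmt12Aux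

open CRG

variable {A B : Type} [Fintype A] [Fintype B] [Nonempty A] [Nonempty B]

instance fdistNonempty {X : Type} [Fintype X] [Nonempty X] : Nonempty (FDist X) :=
  ⟨CRG.dirac (Classical.arbitrary X)⟩

lemma wsum_le {X : Type} [Fintype X] (σ : FDist X) {f : X → ℝ} {c : ℝ}
    (h : ∀ x, f x ≤ c) : ∑ x, σ.1 x * f x ≤ c := by
  calc ∑ x, σ.1 x * f x ≤ ∑ x, σ.1 x * c :=
        Finset.sum_le_sum fun x _ => mul_le_mul_of_nonneg_left (h x) (σ.2.1 x)
    _ = c := by rw [← Finset.sum_mul, σ.2.2, one_mul]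

lemma le_wsum {X : Type} [Fintype X] (σ : FDist X) {f : X → ℝ} {c : ℝ}
    (h : ∀ x, c ≤ f x) : c ≤ ∑ x, σ.1 x * f x := by
  calc c = ∑ x, σ.1 x * c := by rw [← Finset.sum_mul, σ.2.2, one_mul]
    _ ≤ ∑ x, σ.1 x * f x :=
        Finset.sum_le_sum fun x _ => mul_le_mul_of_nonneg_left (h x) (σ.2.1 x)

lemma out_eq_wsum (u : A → B → ℝ) (σA : FDist A) (σB : FDist B) :
    CRG.out u σA σB = ∑ a, σA.1 a * ∑ b, σB.1 b * u a b := by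
  unfold CRG.out
  refine Finset.sum_congr rfl fun a _ => ?_
  rw [Finset.mul_sum]
  exact Finset.sum_congr rfl fun b _ => by ring

lemma out_le_of_le {u : A → B → ℝ} {c : ℝ} (h : ∀ a b, u a b ≤ c)
    (σA : FDist A) (σB : FDist B) : CRG.out u σA σB ≤ c := by
  rw [out_eq_wsum]
  exact wsum_le σA fun a => wsum_le σB fun b => h a b

lemma le_out_of_le {u : A → B → ℝ} {c : ℝ} (h : ∀ a b, c ≤ u a b)
    (σA : FDist A) (σB : FDist B) : c ≤ CRG.out u σA σB := by
  rw [out_eq_wsum]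
  exact le_wsum σA fun a => le_wsum σB fun b => h a b

lemma exists_ub (u : A → B → ℝ) : ∃ c, ∀ a b, u a b ≤ c := by
  refine ⟨Finset.univ.sup' Finset.univ_nonempty
    (fun a => Finset.univ.sup' Finset.univ_nonempty (u a)), fun a b => ?_⟩
  exact le_trans (Finset.le_sup' (u a) (Finset.mem_univ b))
    (Finset.le_sup' (fun a => Finset.univ.sup' Finset.univ_nonempty (u a))
      (Finset.mem_univ a))

lemma exists_lb (u : A → B → ℝ) : ∃ c, ∀ a b, c ≤ u a b := by
  refine ⟨Finset.univ.inf' Finset.univ_nonempty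
    (fun a => Finset.univ.inf' Finset.univ_nonempty (u a)), fun a b => ?_⟩
  exact le_trans
    (Finset.inf'_le (fun a => Finset.univ.inf' Finset.univ_nonempty (u a))
      (Finset.mem_univ a))
    (Finset.inf'_le (u a) (Finset.mem_univ b))

lemma bddBelow_out (u : A → B → ℝ) (σA : FDist A) :
    BddBelow (Set.range fun σB : FDist B => CRG.out u σA σB) := by
  obtain ⟨c, hc⟩ := exists_lb u
  exact ⟨c, by rintro x ⟨σB, rfl⟩; exact le_out_of_le hc σA σB⟩

lemma valStratGF_le_out (u : A → B → ℝ) (σA : FDist A) (σB : FDist B) :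
    CRG.valStratGF u σA ≤ CRG.out u σA σB :=
  ciInf_le (bddBelow_out u σA) σB

lemma bddAbove_valStrat (u : A → B → ℝ) :
    BddAbove (Set.range fun σA : FDist A => CRG.valStratGF u σA) := by
  obtain ⟨c, hc⟩ := exists_ub u
  refine ⟨c, ?_⟩
  rintro x ⟨σA, rfl⟩
  exact le_trans (valStratGF_le_out u σA (Classical.arbitrary _)) (out_le_of_le hc σA _)

lemma valStratGF_le_valGF (u : A → B → ℝ) (σA : FDist A) :
    CRG.valStratGF u σA ≤ CRG.valGF u :=
  le_ciSup (bddAbove_valStrat u) σA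

lemma valGF_mono {u u' : A → B → ℝ} (h : ∀ a b, u a b ≤ u' a b) :
    CRG.valGF u ≤ CRG.valGF u' := by
  refine ciSup_mono (bddAbove_valStrat u') fun σA => ?_
  refine ciInf_mono (bddBelow_out u σA) fun σB => ?_
  unfold CRG.out
  refine Finset.sum_le_sum fun a _ => Finset.sum_le_sum fun b _ => ?_
  exact mul_le_mul_of_nonneg_left (h a b) (mul_nonneg (σA.2.1 a) (σB.2.1 b))

lemma out_dirac_left [DecidableEq A] (u : A → B → ℝ) (a : A) (σB : FDist B) :
    CRG.out u (CRG.dirac a) σB = ∑ b, σB.1 b * u a b := by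
  unfold CRG.out CRG.dirac
  rw [Finset.sum_eq_single a]
  · exact Finset.sum_congr rfl fun b _ => by simp
  · intro a' _ ha'
    simp [ha']
  · simp

lemma outB_eq [DecidableEq B] (u : A → B → ℝ) (σA : FDist A) (b : B) :
    CRG.out u σA (CRG.dirac b) = ∑ a, σA.1 a * u a b := by
  unfold CRG.out CRG.dirac
  refine Finset.sum_congr rfl fun a _ => ?_
  rw [Finset.sum_eq_single b] <;> simp +contextual

lemma valGF_mem_Icc {u : A → B → ℝ} (h : ∀ a b, u a b ∈ Set.Icc (0:ℝ) 1) :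
    CRG.valGF u ∈ Set.Icc (0:ℝ) 1 := by
  constructor
  · refine le_trans ?_ (valStratGF_le_valGF u (CRG.dirac (Classical.arbitrary A)))
    exact le_ciInf fun σB => le_out_of_le (fun a b => (h a b).1) _ _
  · exact ciSup_le fun σA =>
      le_trans (valStratGF_le_out u σA (Classical.arbitrary _))
        (out_le_of_le (fun a b => (h a b).2) σA _)

lemma lt_of_lt_lfp {f : ℝ → ℝ} (hmono : ∀ y z : ℝ, y ≤ z → f y ≤ f z)
    (hmap : ∀ y ∈ Set.Icc (0:ℝ) 1, f y ∈ Set.Icc (0:ℝ) 1)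
    {v y : ℝ} (hv1 : v ∈ Set.Icc (0:ℝ) 1)
    (hleast : ∀ z ∈ Set.Icc (0:ℝ) 1, f z = z → v ≤ z)
    (hy : 0 ≤ y) (hyv : y < v) : y < f y := by
  by_contra hcon
  push_neg at hcon
  set S : Set ℝ := {z | z ∈ Set.Icc 0 y ∧ f z ≤ z} with hS
  have hyS : y ∈ S := ⟨⟨hy, le_refl y⟩, hcon⟩
  have hbdd : BddBelow S := ⟨0, fun z hz => hz.1.1⟩
  set w := sInf S with hw
  have hw0 : 0 ≤ w := le_csInf ⟨y, hyS⟩ fun z hz => hz.1.1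
  have hwy : w ≤ y := csInf_le hbdd hyS
  have hw1 : w ∈ Set.Icc (0:ℝ) 1 := ⟨hw0, le_trans hwy (le_trans hyv.le hv1.2)⟩
  have hfw_le : f w ≤ w := by
    refine le_csInf ⟨y, hyS⟩ fun z hz => ?_
    exact le_trans (hmono _ _ (csInf_le hbdd hz)) hz.2
  have hfw_mem : f w ∈ S :=
    ⟨⟨(hmap w hw1).1, le_trans hfw_le hwy⟩, hmono _ _ hfw_le⟩
  have hfix : f w = w := le_antisymm hfw_le (csInf_le hbdd hfw_mem)
  have := hleast w hw1 hfix
  linarith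

end Stmt12Aux

/-- every determined finite game form is reach-maximizable; a witness can
even be chosen among pure strategies. -/
theorem stmt12
    {A B O : Type} [Fintype A] [Fintype B] [Fintype O]
    [Nonempty A] [Nonempty B] [Nonempty O] [DecidableEq A]
    (ρ : A → B → O) (hdet : CRG.Determined ρ) :
    (∀ (E : Set O) (α : O → ℝ), (∀ o ∉ E, α o ∈ Set.Icc (0:ℝ) 1) →
      ∀ v : ℝ, CRG.IsLfpVal ρ E α v →
        v = 0 ∨ ∃ a : A,
          CRG.dirac a ∈ CRG.OptA (fun a' b => CRG.extendVal E α v (ρ a' b)) ∧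
          ∀ b : B, ρ a b ∉ E) ∧
    ∀ (E : Set O) (α : O → ℝ), (∀ o ∉ E, α o ∈ Set.Icc (0:ℝ) 1) →
      CRG.RMwrt ρ E α := by
  have main : ∀ (E : Set O) (α : O → ℝ), (∀ o ∉ E, α o ∈ Set.Icc (0:ℝ) 1) →
      ∀ v : ℝ, CRG.IsLfpVal ρ E α v →
        v = 0 ∨ ∃ a : A,
          CRG.dirac a ∈ CRG.OptA (fun a' b => CRG.extendVal E α v (ρ a' b)) ∧
          ∀ b : B, ρ a b ∉ E := by
    intro E α hα v hv
    obtain ⟨hv01, hfix, hleast⟩ := hv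
    by_cases hv0 : v = 0
    · exact Or.inl hv0
    right
    have hvpos : 0 < v := lt_of_le_of_ne hv01.1 (Ne.symm hv0)
    have hmono : ∀ y z : ℝ, y ≤ z → CRG.fval ρ E α y ≤ CRG.fval ρ E α z := by
      intro y z hyz
      refine valGF_mono fun a b => ?_
      unfold CRG.extendVal
      split
      · exact hyz
      · exact le_refl _
    have hmap : ∀ y ∈ Set.Icc (0:ℝ) 1, CRG.fval ρ E α y ∈ Set.Icc (0:ℝ) 1 := by
      intro y hy
      refine valGF_mem_Icc fun a b => ?_
      unfold CRG.extendVal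
      split
      · exact hy
      · exact hα _ (by assumption)
    rcases hdet {o | o ∉ E ∧ v ≤ α o} with ⟨a, ha⟩ | ⟨b, hb⟩
    · refine ⟨a, ?_, fun b => (ha b).1⟩
      have h2 : v ≤ CRG.valStratGF (fun a' b => CRG.extendVal E α v (ρ a' b))
          (CRG.dirac a) := by
        refine le_ciInf fun σB => ?_
        rw [out_dirac_left]
        refine le_wsum σB fun b => ?_
        have hb := ha b
        unfold CRG.extendVal
        rw [if_neg hb.1]
        exact hb.2
      have h3 := valStratGF_le_valGF (fun a' b => CRG.extendVal E α v (ρ a' b))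
        (CRG.dirac a)
      have h1 : CRG.valGF (fun a' b => CRG.extendVal E α v (ρ a' b)) = v := hfix
      show CRG.valStratGF (fun a' b => CRG.extendVal E α v (ρ a' b)) (CRG.dirac a)
          = CRG.valGF (fun a' b => CRG.extendVal E α v (ρ a' b))
      refine le_antisymm h3 ?_
      rw [h1]
      exact h2
    · exfalso
      set y := Finset.univ.sup' Finset.univ_nonempty
        (fun a => if ρ a b ∈ E then 0 else α (ρ a b)) with hy_def
      have hy0 : 0 ≤ y := by
        refine le_trans ?_
          (Finset.le_sup' _ (Finset.mem_univ (Classical.arbitrary A)))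
        split
        · exact le_refl 0
        · exact (hα _ (by assumption)).1
      have hyv : y < v := by
        rw [hy_def, Finset.sup'_lt_iff]
        intro a _
        by_cases hE : ρ a b ∈ E
        · simpa [hE] using hvpos
        · have := hb a
          simp only [Set.mem_setOf_eq, not_and, not_le] at this
          simpa [hE] using this hE
      have hfy_le : CRG.fval ρ E α y ≤ y := by
        refine ciSup_le fun σA => ?_
        refine le_trans (valStratGF_le_out _ σA (CRG.dirac b)) ?_
        rw [outB_eq]
        refine wsum_le σA fun a => ?_
        unfold CRG.extendVal
        by_cases hE : ρ a b ∈ E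
        · rw [if_pos hE]
        · rw [if_neg hE]
          have := Finset.le_sup' (f := fun a => if ρ a b ∈ E then 0 else α (ρ a b))
            (Finset.mem_univ a)
          rwa [if_neg hE] at this
      have := lt_of_lt_lfp hmono hmap hv01 hleast hy0 hyv
      have hle : CRG.fval ρ E α y ≤ y := hfy_le
      linarith
  refine ⟨main, ?_⟩
  intro E α hα v hv
  rcases main E α hα v hv with h0 | ⟨a, hopt, hout⟩
  · exact Or.inl h0
  · refine Or.inr ⟨CRG.dirac a, hopt, fun b _ => ⟨a, ?_, hout b⟩⟩
    simp [CRG.supp, CRG.dirac]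
end
end

section
/- Let n ≥ 1 and let f : [0,1]^n → [0,1]^n be monotone with respect to the componentwise order and 1-Lipschitz with respect to the supremum norm. Suppose the least fixed point m of f satisfies m(i) > 0 for every i ∈ {1,…,n}. Then for every ε > 0 there exists v ∈ [0,1]^n with v ⪯ m, ‖m − v‖_∞ ≤ ε, and f(v)(i) > v(i) for every i ∈ {1,…,n}. -/
open scoped BigOperators Classical

noncomputable section

namespace S13

def gm {n : ℕ} (f : (Fin n → ℝ) → (Fin n → ℝ)) (t : ℝ) (v : Fin n → ℝ) : Fin n → ℝ :=
  fun i => max (f v i - t) 0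

def xs {n : ℕ} (f : (Fin n → ℝ) → (Fin n → ℝ)) (t : ℝ) : ℕ → (Fin n → ℝ) :=
  fun k => (gm f t)^[k] (fun _ => 0)

lemma xs_zero {n : ℕ} (f : (Fin n → ℝ) → (Fin n → ℝ)) (t : ℝ) (i : Fin n) :
    xs f t 0 i = 0 := rfl

lemma xs_succ {n : ℕ} (f : (Fin n → ℝ) → (Fin n → ℝ)) (t : ℝ) (k : ℕ) :
    xs f t (k+1) = gm f t (xs f t k) :=
  Function.iterate_succ_apply' (gm f t) k (fun _ => 0)

lemma gm_apply {n : ℕ} (f : (Fin n → ℝ) → (Fin n → ℝ)) (t : ℝ) (v : Fin n → ℝ) (i : Fin n) :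
    gm f t v i = max (f v i - t) 0 := rfl

def mt {n : ℕ} (f : (Fin n → ℝ) → (Fin n → ℝ)) (t : ℝ) : Fin n → ℝ :=
  fun i => ⨆ k, xs f t k i

end S13

/-- for a monotone 1-Lipschitz self-map of `[0,1]^n` whose least fixed
point `m` is positive everywhere, there are valuations `v ⪯ m`, ε-close to `m`, at
which `f` strictly increases in every coordinate. -/
theorem stmt13 (n : ℕ) (hn : 1 ≤ n) (f : (Fin n → ℝ) → (Fin n → ℝ))
    (hmap : ∀ v : Fin n → ℝ, (∀ i, v i ∈ Set.Icc (0:ℝ) 1) →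
      ∀ i, f v i ∈ Set.Icc (0:ℝ) 1)
    (hmono : ∀ v w : Fin n → ℝ, (∀ i, v i ∈ Set.Icc (0:ℝ) 1) →
      (∀ i, w i ∈ Set.Icc (0:ℝ) 1) → v ≤ w → f v ≤ f w)
    (hlip : ∀ v w : Fin n → ℝ, (∀ i, v i ∈ Set.Icc (0:ℝ) 1) →
      (∀ i, w i ∈ Set.Icc (0:ℝ) 1) →
      ∀ C : ℝ, (∀ i, |v i - w i| ≤ C) → ∀ i, |f v i - f w i| ≤ C)
    (m : Fin n → ℝ) (hm : ∀ i, m i ∈ Set.Icc (0:ℝ) 1) (hfix : f m = m)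
    (hleast : ∀ v : Fin n → ℝ, (∀ i, v i ∈ Set.Icc (0:ℝ) 1) → f v = v → m ≤ v)
    (hpos : ∀ i, 0 < m i) :
    ∀ ε : ℝ, 0 < ε →
      ∃ v : Fin n → ℝ,
        (∀ i, v i ∈ Set.Icc (0:ℝ) 1) ∧ v ≤ m ∧ (∀ i, |m i - v i| ≤ ε) ∧
        ∀ i, v i < f v i := by
  intro ε hε
  have hne : Nonempty (Fin n) := ⟨⟨0, hn⟩⟩
  have hm0 : ∀ i, (0:ℝ) ≤ m i := fun i => (hm i).1
  -- g maps the box to itself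
  have hgbox : ∀ t : ℝ, 0 ≤ t → ∀ v : Fin n → ℝ, (∀ i, v i ∈ Set.Icc (0:ℝ) 1) →
      ∀ i, S13.gm f t v i ∈ Set.Icc (0:ℝ) 1 := by
    intro t ht v hv i
    have h1 := (hmap v hv i).2
    rw [S13.gm_apply]
    exact ⟨le_max_right _ _, max_le (by linarith) (by norm_num)⟩
  have hgmono : ∀ t : ℝ, ∀ v w : Fin n → ℝ, (∀ i, v i ∈ Set.Icc (0:ℝ) 1) →
      (∀ i, w i ∈ Set.Icc (0:ℝ) 1) → v ≤ w → S13.gm f t v ≤ S13.gm f t w := by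
    intro t v w hv hw hvw i
    have := hmono v w hv hw hvw i
    exact max_le_max (by linarith) le_rfl
  -- properties of the Kleene iterates
  have hxprop : ∀ t : ℝ, 0 ≤ t → ∀ k : ℕ,
      (∀ i, S13.xs f t k i ∈ Set.Icc (0:ℝ) 1) ∧
      S13.xs f t k ≤ S13.xs f t (k+1) ∧ S13.xs f t k ≤ m := by
    intro t ht k
    induction k with
    | zero =>
      refine ⟨fun i => ?_, fun i => ?_, fun i => ?_⟩
      · rw [S13.xs_zero]; exact ⟨le_rfl, by norm_num⟩
      · rw [S13.xs_zero, S13.xs_succ, S13.gm_apply]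
        exact le_max_right _ _
      · rw [S13.xs_zero]; exact hm0 i
    | succ k ih =>
      obtain ⟨ibox, imono, ilem⟩ := ih
      have box' : ∀ i, S13.xs f t (k+1) i ∈ Set.Icc (0:ℝ) 1 := by
        rw [S13.xs_succ]
        exact hgbox t ht _ ibox
      refine ⟨box', ?_, ?_⟩
      · have h := hgmono t _ _ ibox box' imono
        rw [← S13.xs_succ f t k, ← S13.xs_succ f t (k+1)] at h
        exact h
      · rw [S13.xs_succ]
        intro i
        have h0 : 0 ≤ f (S13.xs f t k) i := (hmap _ ibox i).1
        have h2 : f (S13.xs f t k) i ≤ f m i := hmono _ _ ibox hm ilem i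
        have h3 : f m i = m i := by rw [hfix]
        rw [S13.gm_apply]
        exact max_le (by linarith) (hm0 i)
  have hbdd : ∀ t : ℝ, 0 ≤ t → ∀ i, BddAbove (Set.range fun k => S13.xs f t k i) := by
    intro t ht i
    refine ⟨1, ?_⟩
    rintro y ⟨k, rfl⟩
    exact ((hxprop t ht k).1 i).2
  have hmonok : ∀ t : ℝ, 0 ≤ t → ∀ i, Monotone fun k => S13.xs f t k i := by
    intro t ht i
    exact monotone_nat_of_le_succ fun k => (hxprop t ht k).2.1 i
  have hxleM : ∀ t : ℝ, 0 ≤ t → ∀ k i, S13.xs f t k i ≤ S13.mt f t i := by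
    intro t ht k i
    exact le_ciSup (hbdd t ht i) k
  have hMbox : ∀ t : ℝ, 0 ≤ t → ∀ i, S13.mt f t i ∈ Set.Icc (0:ℝ) 1 := by
    intro t ht i
    constructor
    · have h := hxleM t ht 0 i
      rw [S13.xs_zero] at h
      exact h
    · exact ciSup_le fun k => ((hxprop t ht k).1 i).2
  have hMlem : ∀ t : ℝ, 0 ≤ t → ∀ i, S13.mt f t i ≤ m i := fun t ht i =>
    ciSup_le fun k => (hxprop t ht k).2.2 i
  have htendM : ∀ t : ℝ, 0 ≤ t → ∀ i,
      Filter.Tendsto (fun k => S13.xs f t k i) Filter.atTop (nhds (S13.mt f t i)) :=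
    fun t ht i => tendsto_atTop_ciSup (hmonok t ht i) (hbdd t ht i)
  -- f is continuous along the iterates
  have htendf : ∀ t : ℝ, 0 ≤ t → ∀ i,
      Filter.Tendsto (fun k => f (S13.xs f t k) i) Filter.atTop (nhds (f (S13.mt f t) i)) := by
    intro t ht i
    rw [Metric.tendsto_atTop]
    intro η hη
    have hev : ∀ᶠ k in Filter.atTop, ∀ j, |S13.xs f t k j - S13.mt f t j| < η/2 := by
      rw [Filter.eventually_all]
      intro j
      have h := htendM t ht j
      rw [Metric.tendsto_atTop] at h
      obtain ⟨N, hN⟩ := h (η/2) (by linarith)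
      refine Filter.eventually_atTop.mpr ⟨N, fun k hk => ?_⟩
      have := hN k hk
      rwa [Real.dist_eq] at this
    obtain ⟨N, hN⟩ := Filter.eventually_atTop.mp hev
    refine ⟨N, fun k hk => ?_⟩
    have hle : ∀ j, |S13.xs f t k j - S13.mt f t j| ≤ η/2 := fun j => le_of_lt (hN k hk j)
    have hl := hlip _ _ ((hxprop t ht k).1) (hMbox t ht) (η/2) hle i
    rw [Real.dist_eq]
    linarith
  -- the fixed point equation of mt
  have hMfixeq : ∀ t : ℝ, 0 ≤ t → ∀ i, max (f (S13.mt f t) i - t) 0 = S13.mt f t i := by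
    intro t ht i
    have hB : Filter.Tendsto (fun k => max (f (S13.xs f t k) i - t) 0) Filter.atTop
        (nhds (max (f (S13.mt f t) i - t) 0)) := by
      have h := ((htendf t ht i).sub_const t).max (tendsto_const_nhds (x := (0:ℝ)))
      simpa using h
    have hC : Filter.Tendsto (fun k => S13.xs f t (k+1) i) Filter.atTop
        (nhds (S13.mt f t i)) := by
      have h := (htendM t ht i).comp (Filter.tendsto_add_atTop_nat 1)
      simpa [Function.comp_def] using h
    have heq : (fun k => S13.xs f t (k+1) i) = fun k => max (f (S13.xs f t k) i - t) 0 := by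
      funext k
      rw [S13.xs_succ, S13.gm_apply]
    rw [heq] at hC
    exact tendsto_nhds_unique hB hC
  -- mt is an approximate fixed point of f
  have hMclose : ∀ t : ℝ, 0 ≤ t → ∀ i, |f (S13.mt f t) i - S13.mt f t i| ≤ t := by
    intro t ht i
    have h := hMfixeq t ht i
    have h0 : 0 ≤ f (S13.mt f t) i := (hmap _ (hMbox t ht) i).1
    rcases le_or_gt (f (S13.mt f t) i - t) 0 with hc | hc
    · rw [max_eq_right hc] at h
      rw [← h, sub_zero, abs_of_nonneg h0]
      linarith
    · rw [max_eq_left (le_of_lt hc)] at h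
      have heq : f (S13.mt f t) i - S13.mt f t i = t := by linarith
      rw [heq, abs_of_nonneg ht]
  -- monotonicity in t
  have hxmonot : ∀ s t : ℝ, 0 ≤ s → s ≤ t → ∀ k, S13.xs f t k ≤ S13.xs f s k := by
    intro s t hs hst k
    induction k with
    | zero => exact le_rfl
    | succ k ih =>
      rw [S13.xs_succ f t k, S13.xs_succ f s k]
      intro i
      have hf := hmono _ _ ((hxprop t (le_trans hs hst) k).1) ((hxprop s hs k).1) ih i
      rw [S13.gm_apply, S13.gm_apply]
      exact max_le_max (by linarith) le_rfl
  have hMmonot : ∀ s t : ℝ, 0 ≤ s → s ≤ t → ∀ i, S13.mt f t i ≤ S13.mt f s i := by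
    intro s t hs hst i
    exact ciSup_le fun k => le_trans (hxmonot s t hs hst k i) (hxleM s hs k i)
  -- the sequence t_k = 1/(k+1)
  set tk : ℕ → ℝ := fun k => 1 / ((k:ℝ)+1) with htkdef
  have htkpos : ∀ k, 0 < tk k := fun k => by positivity
  have htkmono : ∀ k, tk (k+1) ≤ tk k := by
    intro k
    apply one_div_le_one_div_of_le
    · positivity
    · push_cast
      linarith
  set L : Fin n → ℝ := fun i => ⨆ k, S13.mt f (tk k) i with hLdef
  have hbddL : ∀ i, BddAbove (Set.range fun k => S13.mt f (tk k) i) := by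
    intro i
    refine ⟨1, ?_⟩
    rintro y ⟨k, rfl⟩
    exact (hMbox (tk k) (le_of_lt (htkpos k)) i).2
  have hmonoL : ∀ i, Monotone fun k => S13.mt f (tk k) i := fun i =>
    monotone_nat_of_le_succ fun k =>
      hMmonot (tk (k+1)) (tk k) (le_of_lt (htkpos (k+1))) (htkmono k) i
  have hMleL : ∀ k i, S13.mt f (tk k) i ≤ L i := fun k i => le_ciSup (hbddL i) k
  have hLlem : ∀ i, L i ≤ m i := fun i =>
    ciSup_le fun k => hMlem (tk k) (le_of_lt (htkpos k)) i
  have hLbox : ∀ i, L i ∈ Set.Icc (0:ℝ) 1 := fun i =>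
    ⟨le_trans (hMbox (tk 0) (le_of_lt (htkpos 0)) i).1 (hMleL 0 i),
      ciSup_le fun k => (hMbox (tk k) (le_of_lt (htkpos k)) i).2⟩
  have htendL : ∀ i, Filter.Tendsto (fun k => S13.mt f (tk k) i) Filter.atTop (nhds (L i)) :=
    fun i => tendsto_atTop_ciSup (hmonoL i) (hbddL i)
  -- choosing K for a given tolerance
  have hKchoice : ∀ η : ℝ, 0 < η →
      ∃ K : ℕ, (∀ j, L j - S13.mt f (tk K) j ≤ η) ∧ tk K ≤ η := by
    intro η hη
    have h1 : ∀ᶠ k in Filter.atTop, ∀ j, L j - η ≤ S13.mt f (tk k) j := by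
      rw [Filter.eventually_all]
      intro j
      exact (htendL j).eventually (eventually_ge_nhds (by linarith))
    have h2 : ∀ᶠ k in Filter.atTop, tk k ≤ η :=
      tendsto_one_div_add_atTop_nhds_zero_nat.eventually (eventually_le_nhds hη)
    obtain ⟨K, hK1, hK2⟩ := (h1.and h2).exists
    exact ⟨K, fun j => by linarith [hK1 j], hK2⟩
  -- L is a fixed point of f; by leastness L = m
  have hLfix : f L = L := by
    funext i
    by_contra hne'
    have habs : 0 < |f L i - L i| := abs_pos.mpr (sub_ne_zero.mpr hne')
    obtain ⟨K, hK1, hK2⟩ := hKchoice (|f L i - L i|/4) (by linarith)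
    have hwbox := hMbox (tk K) (le_of_lt (htkpos K))
    have h1 : |f L i - f (S13.mt f (tk K)) i| ≤ |f L i - L i|/4 := by
      refine hlip L _ hLbox hwbox _ (fun j => ?_) i
      have hle := hMleL K j
      rw [abs_of_nonneg (by linarith)]
      exact hK1 j
    have h2 : |f (S13.mt f (tk K)) i - S13.mt f (tk K) i| ≤ |f L i - L i|/4 :=
      le_trans (hMclose (tk K) (le_of_lt (htkpos K)) i) hK2
    have h3 : |S13.mt f (tk K) i - L i| ≤ |f L i - L i|/4 := by
      have hle := hMleL K i
      rw [abs_of_nonpos (by linarith)]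
      linarith [hK1 i]
    have tri1 : |f L i - L i| ≤ |f L i - S13.mt f (tk K) i| + |S13.mt f (tk K) i - L i| :=
      abs_sub_le _ _ _
    have tri2 : |f L i - S13.mt f (tk K) i| ≤
        |f L i - f (S13.mt f (tk K)) i| + |f (S13.mt f (tk K)) i - S13.mt f (tk K) i| :=
      abs_sub_le _ _ _
    linarith
  have hLm : ∀ i, L i = m i := by
    intro i
    have h := hleast L hLbox hLfix
    exact le_antisymm (hLlem i) (h i)
  -- final choice of v
  obtain ⟨i₀, -, hi₀⟩ := Finset.exists_min_image Finset.univ m ⟨hne.some, Finset.mem_univ _⟩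
  have hc : 0 < m i₀ := hpos i₀
  have hηpos : 0 < min ε (m i₀ / 2) := lt_min hε (by linarith)
  obtain ⟨K, hK1, hK2⟩ := hKchoice (min ε (m i₀ / 2)) hηpos
  have htK : 0 < tk K := htkpos K
  have hvbox := hMbox (tk K) (le_of_lt htK)
  have hvlem := hMlem (tk K) (le_of_lt htK)
  have hK1' : ∀ j, m j - S13.mt f (tk K) j ≤ min ε (m i₀ / 2) := by
    intro j
    have h := hK1 j
    rw [hLm j] at h
    exact h
  refine ⟨S13.mt f (tk K), hvbox, fun i => hvlem i, fun i => ?_, fun i => ?_⟩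
  · rw [abs_of_nonneg (by linarith [hvlem i])]
    exact le_trans (hK1' i) (min_le_left _ _)
  · have hvi : 0 < S13.mt f (tk K) i := by
      have hmin : m i₀ ≤ m i := hi₀ i (Finset.mem_univ i)
      have hh := hK1' i
      have := min_le_right ε (m i₀ / 2)
      linarith
    have hfx := hMfixeq (tk K) (le_of_lt htK) i
    have heq : f (S13.mt f (tk K)) i - tk K = S13.mt f (tk K) i := by
      rcases le_or_gt (f (S13.mt f (tk K)) i - tk K) 0 with hc' | hc'
      · rw [max_eq_right hc'] at hfx
        linarith
      · rwa [max_eq_left (le_of_lt hc')] at hfx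
    linarith
end
end
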